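/- arXiv:2012.14254 — 6 statements merged into one kernel-verified Lean document; each statement's English description precedes it below -/
import Mathlib

section
/- Let s be a Nash equilibrium of the sum classic network creation game with graph G = G[s], let H be a non-trivial biconnected component of G, let u ∈ V(G), v ∈ V(H), and let e_1 = vv_1, …, e_l = vv_l be links of H bought by v. If xy is an edge of G with x ∈ A^{j,u}_{e_1,…,e_l}(v) and y ∉ A^{j,u}_{e_1,…,e_l}(v) for some 1 ≤ j ≤ l, then both x and y belong to V(H). -/
open SimpleGraph Finset
open scoped Classical

/-! ### The sum classic network creation game -/

/-- The communication network `G[s]` of a strategy profile `s`: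
an undirected graph on the players with an edge between `u` and `v`
iff `v ∈ s u` or `u ∈ s v`. -/
def commGraph (n : ℕ) (s : Fin n → Finset (Fin n)) : SimpleGraph (Fin n) :=
  SimpleGraph.fromRel (fun u v => v ∈ s u)

/-- A strategy profile is valid if no player buys a link to itself,
i.e. `s u ⊆ V ∖ {u}`. -/
def ValidProfile (n : ℕ) (s : Fin n → Finset (Fin n)) : Prop := ∀ u, u ∉ s u

/-- The (finite part of the) cost of player `u`:
`α·|s_u|` plus the sum of the distances from `u` to all other players. -/
noncomputable def gameCost (n : ℕ) (α : ℝ) (s : Fin n → Finset (Fin n)) (u : Fin n) : ℝ :=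
  α * (s u).card + ∑ v, ((commGraph n s).dist u v : ℝ)

/-- The cost of player `u`, with value `⊤` when the communication network
is disconnected. -/
noncomputable def gameCostE (n : ℕ) (α : ℝ) (s : Fin n → Finset (Fin n)) (u : Fin n) : EReal :=
  if (commGraph n s).Connected then ((gameCost n α s u : ℝ) : EReal) else ⊤

/-- Nash equilibrium of the sum classic network creation game: the communication
network is connected and no unilateral deviation strictly decreases the deviator's
cost (a deviation yielding a disconnected network has cost `+∞`, hence is never
an improvement and can be ignored). -/
def IsNE (n : ℕ) (α : ℝ) (s : Fin n → Finset (Fin n)) : Prop :=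
  ValidProfile n s ∧ (commGraph n s).Connected ∧
    ∀ (u : Fin n) (t : Finset (Fin n)), u ∉ t →
      (commGraph n (Function.update s u t)).Connected →
      gameCost n α s u ≤ gameCost n α (Function.update s u t) u

/-- Buying Nash equilibrium: no player can strictly decrease its cost by only
buying additional links (the deviated network is automatically connected). -/
def IsBuyingNE (n : ℕ) (α : ℝ) (s : Fin n → Finset (Fin n)) : Prop :=
  ValidProfile n s ∧ (commGraph n s).Connected ∧
    ∀ (u : Fin n) (t : Finset (Fin n)), u ∉ t → s u ⊆ t →
      gameCost n α s u ≤ gameCost n α (Function.update s u t) u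

/-! ### Biconnected components -/

/-- A graph is biconnected if it is connected and removing any single vertex
keeps it connected (no cut vertex). -/
def Biconnected {V : Type*} (G : SimpleGraph V) : Prop :=
  G.Connected ∧ ∀ v : V, (G.induce {w | w ≠ v}).Connected

/-- `S` is the vertex set of a biconnected component of `G`: it induces a
biconnected subgraph and is maximal with this property. -/
def IsBiconnectedComponent {V : Type*} (G : SimpleGraph V) (S : Set V) : Prop :=
  Biconnected (G.induce S) ∧ ∀ T : Set V, S ⊆ T → Biconnected (G.induce T) → T = S

/-- `deg_H^+(v)`: the number of links of the subgraph induced by `S` that are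
bought by `v`. -/
noncomputable def degHplus (n : ℕ) (s : Fin n → Finset (Fin n)) (S : Set (Fin n))
    (v : Fin n) : ℕ :=
  ((↑(s v) : Set (Fin n)) ∩ S).ncard

/-! ### A sets -/

/-- `z` belongs to the `A` set `A^u_{e_1,…,e_k}(v)` where the bought edges
`e_i = v vᵢ` have endpoints `vs`: every shortest path in `G` from `z` to `u`
passes through `v`, and the predecessor of `v` on any such path lies in `vs`. -/
def InAset {V : Type*} (G : SimpleGraph V) (u v : V) (vs : Set V) (z : V) : Prop :=
  ∀ p : G.Walk z u, p.length = G.dist z u →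
    ∃ i, 0 < i ∧ i ≤ p.length ∧ p.getVert i = v ∧ p.getVert (i - 1) ∈ vs

/-- `z` belongs to the set `A^{j,u}_{e_1,…,e_k}(v)`: it belongs to
`A^u_{e_1,…,e_k}(v)` and admits a shortest path to `u` through `v` whose
predecessor of `v` is `vj`. -/
def InAjset {V : Type*} (G : SimpleGraph V) (u v vj : V) (vs : Set V) (z : V) : Prop :=
  InAset G u v vs z ∧ ∃ p : G.Walk z u, p.length = G.dist z u ∧
    ∃ i, 0 < i ∧ i ≤ p.length ∧ p.getVert i = v ∧ p.getVert (i - 1) = vj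

/-! ### Auxiliary graphs -/

/-- The `k`-th power of a graph: distinct `u`, `v` are adjacent iff their
distance in `G` is at most `k`. -/
def powerGraph {V : Type*} (G : SimpleGraph V) (k : ℕ) : SimpleGraph V where
  Adj u v := u ≠ v ∧ G.dist u v ≤ k
  symm := ⟨fun u v h => ⟨h.1.symm, by rw [SimpleGraph.dist_comm]; exact h.2⟩⟩
  loopless := ⟨fun u h => h.1 rfl⟩

/-- A graph on `n` vertices is `ε`-distance-almost-uniform iff there is a
distance index `r` such that every vertex has at least `n(1−ε)` vertices at
distance exactly `r` or at distance exactly `r+1`. -/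
def DistanceAlmostUniform {V : Type*} (G : SimpleGraph V) (n : ℕ) (ε : ℝ) : Prop :=
  ∃ r : ℕ, ∀ u : V, (n : ℝ) * (1 - ε) ≤
    max ({z | G.dist u z = r}.ncard : ℝ) ({z | G.dist u z = r + 1}.ncard : ℝ)

/-- The crossing graph `Z` of a family of vertex sets `A i`: `i ≠ j` are
adjacent iff some edge of `G` joins `A i` and `A j`. -/
def crossGraph {V : Type*} {l : ℕ} (G : SimpleGraph V) (A : Fin l → Set V) :
    SimpleGraph (Fin l) :=
  SimpleGraph.fromRel (fun i j => ∃ x y, G.Adj x y ∧ x ∈ A i ∧ y ∈ A j)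

/-- The maximum diameter of a connected component of `Z`. -/
noncomputable def maxCompDiam {V : Type*} (Z : SimpleGraph V) : ℕ :=
  sSup {d | ∃ i j, Z.Reachable i j ∧ Z.dist i j = d}

namespace NCGAux


variable {V : Type*} {G : SimpleGraph V}

def reachIn (G : SimpleGraph V) (T : Set V) (a b : V) : Prop :=
  ∃ w : G.Walk a b, ∀ z ∈ w.support, z ∈ T

lemma reachIn_refl {T : Set V} {a : V} (ha : a ∈ T) : reachIn G T a a :=
  ⟨Walk.nil, by simpa using ha⟩

lemma reachIn_symm {T : Set V} {a b : V} (h : reachIn G T a b) : reachIn G T b a := by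
  obtain ⟨w, hw⟩ := h
  exact ⟨w.reverse, fun z hz => hw z (by simpa [Walk.support_reverse] using hz)⟩

lemma reachIn_trans {T : Set V} {a b c : V} (h : reachIn G T a b) (h' : reachIn G T b c) :
    reachIn G T a c := by
  obtain ⟨w, hw⟩ := h; obtain ⟨w', hw'⟩ := h'
  refine ⟨w.append w', fun z hz => ?_⟩
  rcases (Walk.mem_support_append_iff _ _).mp hz with h | h
  · exact hw z h
  · exact hw' z h

lemma reachIn_mono {T T' : Set V} (hTT : T ⊆ T') {a b : V} (h : reachIn G T a b) :
    reachIn G T' a b := by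
  obtain ⟨w, hw⟩ := h; exact ⟨w, fun z hz => hTT (hw z hz)⟩

lemma path_getVert_inj {a b : V} {p : G.Walk a b} (hp : p.IsPath) :
    ∀ {i j : ℕ}, i ≤ p.length → j ≤ p.length → p.getVert i = p.getVert j → i = j := by
  induction p with
  | nil => intro i j hi hj _; simp at hi hj; omega
  | cons h q ih =>
    intro i j hi hj hij
    rw [Walk.cons_isPath_iff] at hp
    match i, j with
    | 0, 0 => rfl
    | 0, (j+1) =>
      exfalso
      apply hp.2
      rw [Walk.getVert_zero, Walk.getVert_cons_succ] at hij
      rw [Walk.mem_support_iff_exists_getVert]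
      exact ⟨j, hij.symm, by simpa using hj⟩
    | (i+1), 0 =>
      exfalso
      apply hp.2
      rw [Walk.getVert_zero, Walk.getVert_cons_succ] at hij
      rw [Walk.mem_support_iff_exists_getVert]
      exact ⟨i, hij, by simpa using hi⟩
    | (i+1), (j+1) =>
      rw [Walk.getVert_cons_succ, Walk.getVert_cons_succ] at hij
      have := ih hp.1 (by simpa using hi) (by simpa using hj) hij
      omega

lemma walk_decomp_two {a b : V} (p : G.Walk a b) (i : ℕ) (h0 : 0 < i) (h : i ≤ p.length) :
    ∃ (w' v' : V) (q₁ : G.Walk a w') (hadj : G.Adj w' v') (q₂ : G.Walk v' b),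
      p = q₁.append (Walk.cons hadj q₂) ∧ q₁.length = i - 1
        ∧ w' = p.getVert (i-1) ∧ v' = p.getVert i := by
  induction p generalizing i with
  | nil => simp at h; omega
  | @cons u v' w hadj q ih =>
    match i with
    | 1 =>
      exact ⟨u, v', Walk.nil, hadj, q, by simp, rfl, by simp, by simp⟩
    | (i+2) =>
      obtain ⟨w', v'', q₁, hadj', q₂, hq, hl, hw, hv⟩ := ih (i+1) (by omega) (by simpa using h)
      refine ⟨w', v'', Walk.cons hadj q₁, hadj', q₂, ?_, by simp [hl], by simpa using hw,
        by simpa using hv⟩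
      rw [Walk.cons_append, ← hq]

/-- Gluing two paths sharing only their common endpoint. -/
lemma isPath_append_of {a b c : V} {p : G.Walk a b} {q : G.Walk b c}
    (hp : p.IsPath) (hq : q.IsPath) (h : ∀ z ∈ p.support, z ∈ q.support → z = b) :
    (p.append q).IsPath := by
  rw [Walk.isPath_def, Walk.support_append, List.nodup_append]
  refine ⟨hp.support_nodup, ?_, ?_⟩
  · have := hq.support_nodup
    rw [q.support_eq_cons] at this
    exact this.of_cons
  · intro z hz z' hz' hzz'
    subst hzz'
    have hzq : z ∈ q.support := List.mem_of_mem_tail hz'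
    have hzb := h z hz hzq
    subst hzb
    have := hq.support_nodup
    rw [q.support_eq_cons] at this
    exact (List.nodup_cons.mp this).1 hz'

/-- First hit of a set `T` along a walk. -/
lemma first_hit {a b : V} (w : G.Walk a b) (T : Set V) (hb : b ∈ T) :
    ∃ z, z ∈ T ∧ ∃ w₁ : G.Walk a z,
      (∀ t ∈ w₁.support, t ∈ w.support) ∧ (∀ t ∈ w₁.support, t ∈ T → t = z)
      ∧ (w.IsPath → w₁.IsPath) := by
  induction w with
  | nil => exact ⟨_, hb, Walk.nil, by simp, by simp, fun _ => by simp⟩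
  | @cons u v' w' hadj q ih =>
    by_cases hu : u ∈ T
    · exact ⟨u, hu, Walk.nil, by simp, by simp, fun _ => by simp⟩
    · obtain ⟨z, hzT, w₁, hsub, hfirst, hpath⟩ := ih hb
      refine ⟨z, hzT, Walk.cons hadj w₁, ?_, ?_, ?_⟩
      · intro t ht
        rw [Walk.support_cons, List.mem_cons] at ht ⊢
        exact ht.imp id (fun h => hsub t h)
      · intro t ht htT
        rw [Walk.support_cons, List.mem_cons] at ht
        rcases ht with rfl | ht
        · exact absurd htT hu
        · exact hfirst t ht htT
      · intro hP
        rw [Walk.cons_isPath_iff] at hP ⊢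
        exact ⟨hpath hP.1, fun hc => hP.2 (hsub u hc)⟩



variable {V : Type*} {G : SimpleGraph V}


/-- Walks within `T` give reachability in the induced graph. -/
lemma reachIn_to_induce {T : Set V} : ∀ {a b : V} (w : G.Walk a b)
    (hw : ∀ z ∈ w.support, z ∈ T) (ha : a ∈ T) (hb : b ∈ T),
    (G.induce T).Reachable ⟨a, ha⟩ ⟨b, hb⟩ := by
  intro a b w
  induction w with
  | nil => intro _ _ _; rfl
  | @cons u v' w' hadj q ih =>
    intro hw ha hb
    have hv' : v' ∈ T := hw v' (by simp)
    have h1 : (G.induce T).Adj ⟨u, ha⟩ ⟨v', hv'⟩ := hadj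
    exact (h1.reachable).trans (ih (fun z hz => hw z (by simp [hz])) hv' hb)

lemma induce_walk_support {T : Set V} {A B : ↥T} (w : (G.induce T).Walk A B) :
    ∃ w' : G.Walk (A : V) (B : V), ∀ z ∈ w'.support, z ∈ T := by
  refine ⟨w.map (SimpleGraph.Embedding.induce T).toHom, fun z hz => ?_⟩
  erw [Walk.support_map, List.mem_map] at hz
  obtain ⟨⟨z', hz'⟩, _, rfl⟩ := hz
  exact hz'

lemma connected_induce_iff {T : Set V} :
    (G.induce T).Connected ↔ T.Nonempty ∧ ∀ a ∈ T, ∀ b ∈ T, reachIn G T a b := by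
  constructor
  · intro h
    obtain ⟨⟨z, hz⟩⟩ := h.nonempty
    refine ⟨⟨z, hz⟩, fun a ha b hb => ?_⟩
    obtain ⟨w⟩ := h.preconnected ⟨a, ha⟩ ⟨b, hb⟩
    exact induce_walk_support w
  · rintro ⟨⟨z, hz⟩, h⟩
    have : Nonempty ↥T := ⟨⟨z, hz⟩⟩
    refine ⟨fun A B => ?_⟩
    obtain ⟨a, ha⟩ := A; obtain ⟨b, hb⟩ := B
    obtain ⟨w, hw⟩ := h a ha b hb
    exact reachIn_to_induce w hw ha hb

/-- Reachability in the doubly-induced graph (removal of one vertex). -/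
lemma reachIn_to_induce₂ {S : Set V} {v₀ : ↥S} : ∀ {a b : V} (w : G.Walk a b)
    (hw : ∀ z ∈ w.support, z ∈ S \ {(v₀ : V)}) (ha : a ∈ S \ {(v₀ : V)}) (hb : b ∈ S \ {(v₀ : V)}),
    ((G.induce S).induce {w : ↥S | w ≠ v₀}).Reachable
      ⟨⟨a, ha.1⟩, fun hc => ha.2 (by rw [← hc]; rfl)⟩ ⟨⟨b, hb.1⟩, fun hc => hb.2 (by rw [← hc]; rfl)⟩ := by
  intro a b w
  induction w with
  | nil => intro _ _ _; rfl
  | @cons u v' w' hadj q ih =>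
    intro hw ha hb
    have hv' : v' ∈ S \ {(v₀ : V)} := hw v' (by simp)
    have h1 : ((G.induce S).induce {w : ↥S | w ≠ v₀}).Adj
        ⟨⟨u, ha.1⟩, fun hc => ha.2 (by rw [← hc]; rfl)⟩ ⟨⟨v', hv'.1⟩, fun hc => hv'.2 (by rw [← hc]; rfl)⟩ :=
      hadj
    exact (h1.reachable).trans (ih (fun z hz => hw z (by simp [hz])) hv' hb)

lemma connected_induce_del_iff {S : Set V} (v₀ : ↥S) :
    ((G.induce S).induce {w : ↥S | w ≠ v₀}).Connected ↔
      (S \ {(v₀ : V)}).Nonempty ∧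
        ∀ a ∈ S \ {(v₀ : V)}, ∀ b ∈ S \ {(v₀ : V)}, reachIn G (S \ {(v₀ : V)}) a b := by
  constructor
  · intro h
    obtain ⟨⟨⟨z, hzS⟩, hzne⟩⟩ := h.nonempty
    refine ⟨⟨z, hzS, fun hc => hzne (Subtype.ext hc)⟩, fun a ha b hb => ?_⟩
    obtain ⟨w⟩ := h.preconnected ⟨⟨a, ha.1⟩, fun hc => ha.2 (by rw [← hc]; rfl)⟩
      ⟨⟨b, hb.1⟩, fun hc => hb.2 (by rw [← hc]; rfl)⟩
    refine ⟨(w.map (SimpleGraph.Embedding.induce _).toHom).map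
      (SimpleGraph.Embedding.induce S).toHom, fun z hz => ?_⟩
    erw [Walk.support_map, List.mem_map] at hz
    obtain ⟨z', hz', rfl⟩ := hz
    erw [Walk.support_map, List.mem_map] at hz'
    obtain ⟨⟨⟨z'', hz''S⟩, hz''ne⟩, _, rfl⟩ := hz'
    exact ⟨hz''S, fun hc => hz''ne (Subtype.ext hc)⟩
  · rintro ⟨⟨z, hzS, hzne⟩, h⟩
    have : Nonempty ↥{w : ↥S | w ≠ v₀} :=
      ⟨⟨⟨z, hzS⟩, fun hc => hzne (by rw [← hc]; rfl)⟩⟩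
    refine ⟨fun A B => ?_⟩
    obtain ⟨⟨a, haS⟩, hane⟩ := A; obtain ⟨⟨b, hbS⟩, hbne⟩ := B
    have ha : a ∈ S \ {(v₀ : V)} := ⟨haS, fun hc => hane (Subtype.ext hc)⟩
    have hb : b ∈ S \ {(v₀ : V)} := ⟨hbS, fun hc => hbne (Subtype.ext hc)⟩
    obtain ⟨w, hw⟩ := h a ha b hb
    exact reachIn_to_induce₂ w hw ha hb

lemma biconnected_induce_iff {S : Set V} :
    Biconnected (G.induce S) ↔
      (S.Nonempty ∧ ∀ a ∈ S, ∀ b ∈ S, reachIn G S a b) ∧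
        ∀ c ∈ S, ((S \ {c}).Nonempty ∧
          ∀ a ∈ S \ {c}, ∀ b ∈ S \ {c}, reachIn G (S \ {c}) a b) := by
  unfold Biconnected
  rw [connected_induce_iff]
  refine and_congr Iff.rfl ?_
  rw [Subtype.forall]
  refine forall₂_congr fun c hc => ?_
  exact connected_induce_del_iff ⟨c, hc⟩



/-- In a path `W`, any vertex `w₀` other than `c` avoids one of the two pieces at `c`. -/
lemma path_split_avoid [DecidableEq V] {a b c w₀ : V} {W : G.Walk a b} (hW : W.IsPath)
    (hc : c ∈ W.support) (hw : w₀ ≠ c) :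
    w₀ ∉ (W.takeUntil c hc).support ∨ w₀ ∉ (W.dropUntil c hc).support := by
  by_contra h
  push_neg at h
  obtain ⟨h1, h2⟩ := h
  have hnd := hW.support_nodup
  rw [← W.take_spec hc, Walk.support_append, List.nodup_append] at hnd
  refine hnd.2.2 _ h1 _ ?_ rfl
  have := (W.dropUntil c hc).support_eq_cons
  rw [this] at h2
  rcases List.mem_cons.mp h2 with h2 | h2
  · exact absurd h2 hw
  · exact h2

/-- Ear lemma: a simple path between two distinct vertices of a maximal biconnected
set stays inside the set. -/
lemma ear [DecidableEq V] {S : Set V} (hS : IsBiconnectedComponent G S)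
    {a b : V} (hab : a ≠ b) (ha : a ∈ S) (hb : b ∈ S)
    (W : G.Walk a b) (hW : W.IsPath) : ∀ z ∈ W.support, z ∈ S := by
  classical
  set T : Set V := S ∪ {z | z ∈ W.support} with hT
  have hST : S ⊆ T := Set.subset_union_left
  have hWT : ∀ z ∈ W.support, z ∈ T := fun z hz => Or.inr hz
  obtain ⟨⟨hSne, hSreach⟩, hSdel⟩ := biconnected_induce_iff.mp hS.1
  -- connect any vertex of T to a vertex of S within T minus a removed vertex
  have key : ∀ w₀ : V, ∀ c ∈ T, c ≠ w₀ → ∃ a' ∈ S, a' ≠ w₀ ∧ reachIn G (T \ {w₀}) c a' := by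
    intro w₀ c hcT hcw
    rcases hcT with hcS | hcW
    · exact ⟨c, hcS, hcw, reachIn_refl ⟨hST hcS, hcw⟩⟩
    · rcases path_split_avoid hW hcW (Ne.symm hcw) with h | h
      · refine ⟨a, ha, fun hc => h (hc ▸ (W.takeUntil c hcW).start_mem_support), ?_⟩
        apply reachIn_symm
        refine ⟨W.takeUntil c hcW, fun z hz => ?_⟩
        exact ⟨hWT z (W.support_takeUntil_subset hcW hz), fun hzz => h (by rw [Set.mem_singleton_iff] at hzz; rwa [hzz] at hz)⟩
      · refine ⟨b, hb, fun hc => h (hc ▸ (W.dropUntil c hcW).end_mem_support), ?_⟩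
        refine ⟨W.dropUntil c hcW, fun z hz => ?_⟩
        exact ⟨hWT z (W.support_dropUntil_subset hcW hz), fun hzz => h (by rw [Set.mem_singleton_iff] at hzz; rwa [hzz] at hz)⟩
  -- S minus a vertex is internally connected within T minus that vertex
  have Sdel : ∀ w₀ : V, ∀ a' ∈ S, ∀ b' ∈ S, a' ≠ w₀ → b' ≠ w₀ →
      reachIn G (T \ {w₀}) a' b' := by
    intro w₀ a' ha' b' hb' haw hbw
    by_cases hwS : w₀ ∈ S
    · have := (hSdel w₀ hwS).2 a' ⟨ha', haw⟩ b' ⟨hb', hbw⟩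
      exact reachIn_mono (fun z (hz : z ∈ S \ {w₀}) => show z ∈ T \ {w₀} from ⟨hST hz.1, hz.2⟩) this
    · have := hSreach a' ha' b' hb'
      exact reachIn_mono (fun z (hz : z ∈ S) => show z ∈ T \ {w₀} from ⟨hST hz, fun hc => hwS (by rw [Set.mem_singleton_iff] at hc; rwa [hc] at hz)⟩) this
  have hbicT : Biconnected (G.induce T) := by
    rw [biconnected_induce_iff]
    refine ⟨⟨⟨a, hST ha⟩, ?_⟩, ?_⟩
    · -- global connectivity of T
      intro c hcT d hdT
      have hc' : reachIn G T c a := by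
        rcases hcT with h | h
        · exact reachIn_mono (fun z hz => hST hz) (hSreach c h a ha)
        · exact reachIn_symm ⟨W.takeUntil c h, fun z hz =>
            hWT z (W.support_takeUntil_subset h hz)⟩
      have hd' : reachIn G T d a := by
        rcases hdT with h | h
        · exact reachIn_mono (fun z hz => hST hz) (hSreach d h a ha)
        · exact reachIn_symm ⟨W.takeUntil d h, fun z hz =>
            hWT z (W.support_takeUntil_subset h hz)⟩
      exact reachIn_trans hc' (reachIn_symm hd')
    · -- deleting any vertex
      intro w₀ hw₀T
      constructor
      · rcases eq_or_ne a w₀ with rfl | hne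
        · exact ⟨b, hST hb, Ne.symm hab⟩
        · exact ⟨a, hST ha, hne⟩
      · intro c hc d hd
        obtain ⟨a', ha'S, ha'w, hca⟩ := key w₀ c hc.1 hc.2
        obtain ⟨b', hb'S, hb'w, hdb⟩ := key w₀ d hd.1 hd.2
        exact reachIn_trans hca (reachIn_trans (Sdel w₀ a' ha'S b' hb'S ha'w hb'w)
          (reachIn_symm hdb))
  have := hS.2 T hST hbicT
  intro z hz
  rw [← this]
  exact hWT z hz



/-- lengths of the two pieces of a shortest walk. -/
lemma split_lengths (hconn : G.Connected) {a b c : V} (q₁ : G.Walk a c) (q₂ : G.Walk c b)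
    (h : (q₁.append q₂).length = G.dist a b) :
    q₁.length = G.dist a c ∧ q₂.length = G.dist c b := by
  have h1 := SimpleGraph.dist_le q₁
  have h2 := SimpleGraph.dist_le q₂
  have h3 := hconn.dist_triangle (u := a) (v := c) (w := b)
  rw [Walk.length_append] at h
  omega

lemma mem_concat_support {a b c z : V} (p : G.Walk a b) (h : G.Adj b c)
    (hz : z ∈ (p.concat h).support) (hzc : z ≠ c) : z ∈ p.support := by
  rw [Walk.support_concat, List.mem_append] at hz
  rcases hz with hz | hz
  · exact hz
  · simp at hz; exact absurd hz hzc

lemma not_mem_concat_self {a b c : V} {p : G.Walk a b} {h : G.Adj b c}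
    (hp : (p.concat h).IsPath) : c ∉ p.support := by
  have := hp.support_nodup
  rw [Walk.support_concat, List.nodup_append] at this
  intro hc
  exact this.2.2 _ hc _ (by simp) rfl

/-- The master construction: a simple path from `vj` through `x`, `y` to `v`. -/
lemma master [DecidableEq V] (hconn : G.Connected) {S : Set V}
    (hS : IsBiconnectedComponent G S) {v : V} (hv : v ∈ S) {vs : Set V} (hvs : vs ⊆ S)
    {x y vj : V} (hxy : G.Adj x y) (hyv : y ≠ v) (hvj : vj ∈ vs)
    (P₁' : G.Walk x vj) (hadj : G.Adj vj v) (hXlen : P₁'.length + 1 = G.dist x v)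
    (entx : ∀ (w : V) (W₀ : G.Walk x w), G.Adj w v → W₀.length + 1 = G.dist x v → w ∈ vs)
    (Y : G.Walk y v) (hYlen : Y.length = G.dist y v)
    (hbranch : (∀ W₀ : G.Walk y vj, W₀.length + 1 = G.dist y v → False) ∨
      (∃ (w₀ : V) (Y₀ : G.Walk y w₀) (h₀ : G.Adj w₀ v), Y = Y₀.concat h₀ ∧ w₀ ∉ vs)) :
    x ∈ S ∧ y ∈ S := by
  classical
  set X : G.Walk x v := P₁'.concat hadj with hXdef
  have hXlen' : X.length = G.dist x v := by rw [hXdef, Walk.length_concat]; exact hXlen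
  have hXpath : X.IsPath := X.isPath_of_length_eq_dist hXlen'
  have hYpath : Y.IsPath := Y.isPath_of_length_eq_dist hYlen
  have hxv : x ≠ v := by
    intro hc
    subst hc
    rw [SimpleGraph.dist_self] at hXlen
    omega
  have hvP₁ : v ∉ P₁'.support := not_mem_concat_self hXpath
  have hP₁len : P₁'.length = G.dist x vj := by
    have h1 := SimpleGraph.dist_le P₁'
    have h2 := hconn.dist_triangle (u := x) (v := vj) (w := v)
    have h3 : G.dist vj v = 1 := SimpleGraph.dist_eq_one_iff_adj.mpr hadj
    omega
  have hP₁path : P₁'.IsPath := P₁'.isPath_of_length_eq_dist hP₁len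
  -- the two shortest paths share only `v`
  have hI : ∀ z, z ∈ X.support → z ∈ Y.support → z = v := by
    intro z hzX hzY
    by_contra hzv
    have hzP₁ : z ∈ P₁'.support := mem_concat_support _ _ hzX hzv
    -- distances along X
    have hXsplit := split_lengths hconn (X.takeUntil z hzX) (X.dropUntil z hzX)
      (by rw [Walk.take_spec]; exact hXlen')
    -- distances along Y
    have hYsplit := split_lengths hconn (Y.takeUntil z hzY) (Y.dropUntil z hzY)
      (by rw [Walk.take_spec]; exact hYlen)
    have hdxz : G.dist x z + G.dist z v = G.dist x v := by
      have := congrArg Walk.length (X.take_spec hzX)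
      rw [Walk.length_append] at this
      rw [← hXsplit.1, ← hXsplit.2, this, hXlen']
    have hdyz : G.dist y z + G.dist z v = G.dist y v := by
      have := congrArg Walk.length (Y.take_spec hzY)
      rw [Walk.length_append] at this
      rw [← hYsplit.1, ← hYsplit.2, this, hYlen]
    rcases hbranch with h1 | h2
    · -- swap the tail: gives a shortest y→v walk entering through vj
      set D₀ : G.Walk z vj := P₁'.dropUntil z hzP₁ with hD₀
      have hX2 : (P₁'.takeUntil z hzP₁).append (D₀.concat hadj) = X := by
        have : ((P₁'.takeUntil z hzP₁).append (P₁'.dropUntil z hzP₁)).concat hadj = X := by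
          rw [Walk.take_spec]
        rw [← Walk.append_concat] at this
        exact this
      have hsl := split_lengths hconn (P₁'.takeUntil z hzP₁) (D₀.concat hadj)
        (by rw [hX2]; exact hXlen')
      have hDlen : D₀.length + 1 = G.dist z v := by
        have := hsl.2
        rwa [Walk.length_concat] at this
      refine h1 ((Y.takeUntil z hzY).append D₀) ?_
      rw [Walk.length_append, hYsplit.1]
      omega
    · obtain ⟨w₀, Y₀, h₀, hYeq, hw₀⟩ := h2
      have hzY₀ : z ∈ Y₀.support := by
        rw [hYeq] at hzY
        exact mem_concat_support _ _ hzY hzv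
      set D₀ : G.Walk z w₀ := Y₀.dropUntil z hzY₀ with hD₀
      have hY2 : (Y₀.takeUntil z hzY₀).append (D₀.concat h₀) = Y := by
        have : ((Y₀.takeUntil z hzY₀).append (Y₀.dropUntil z hzY₀)).concat h₀ = Y := by
          rw [Walk.take_spec, hYeq]
        rw [← Walk.append_concat] at this
        exact this
      have hsl := split_lengths hconn (Y₀.takeUntil z hzY₀) (D₀.concat h₀)
        (by rw [hY2]; exact hYlen)
      have hDlen : D₀.length + 1 = G.dist z v := by
        have := hsl.2
        rwa [Walk.length_concat] at this
      refine hw₀ (entx w₀ ((X.takeUntil z hzX).append D₀) h₀ ?_)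
      rw [Walk.length_append, hXsplit.1]
      omega
  -- assemble the final path from vj to v through x and y
  have hxY : x ∉ Y.support := by
    intro hc
    exact hxv (hI x X.start_mem_support hc)
  have hconsPath : (Walk.cons hxy Y).IsPath := hYpath.cons hxY
  have hWfin : (P₁'.reverse.append (Walk.cons hxy Y)).IsPath := by
    refine isPath_append_of hP₁path.reverse hconsPath ?_
    intro z hz hz'
    rw [Walk.support_reverse, List.mem_reverse] at hz
    rw [Walk.support_cons, List.mem_cons] at hz'
    rcases hz' with rfl | hz'
    · rfl
    · exfalso
      have hzX : z ∈ X.support := by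
        rw [hXdef, Walk.support_concat, List.mem_append]
        exact Or.inl hz
      exact hvP₁ ((hI z hzX hz') ▸ hz)
  have hall := ear hS hadj.ne (hvs hvj) hv (P₁'.reverse.append (Walk.cons hxy Y)) hWfin
  constructor
  · refine hall x ?_
    rw [Walk.mem_support_append_iff]
    exact Or.inr (by rw [Walk.support_cons]; exact List.mem_cons_self)
  · refine hall y ?_
    rw [Walk.mem_support_append_iff]
    exact Or.inr (by rw [Walk.support_cons]; exact List.mem_cons.mpr (Or.inr Y.start_mem_support))


lemma getVert_mid {a w v b : V} (W₀ : G.Walk a w) (h : G.Adj w v) (P₂ : G.Walk v b) :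
    (W₀.append (Walk.cons h P₂)).getVert (W₀.length + 1) = v ∧
    (W₀.append (Walk.cons h P₂)).getVert W₀.length = w := by
  constructor
  · rw [Walk.getVert_append, if_neg (by omega)]
    have : W₀.length + 1 - W₀.length = 1 := by omega
    rw [this, Walk.getVert_cons_succ]
    exact Walk.getVert_zero _
  · rw [Walk.getVert_append, if_neg (by omega), Nat.sub_self]
    exact Walk.getVert_zero _

/-- The core graph-theoretic statement. -/
lemma core [DecidableEq V] (hconn : G.Connected) {S : Set V}
    (hS : IsBiconnectedComponent G S) {u v : V} (hv : v ∈ S) {vs : Set V} (hvs : vs ⊆ S)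
    {x y : V} (hxy : G.Adj x y) {vj : V} (hvj : vj ∈ vs)
    (hx : InAjset G u v vj vs x) (hy : ¬ InAjset G u v vj vs y) :
    x ∈ S ∧ y ∈ S := by
  classical
  obtain ⟨hxA, p, hplen, i₀, hi₀pos, hi₀le, hgv, hgv'⟩ := hx
  obtain ⟨w', v', P₁', hadj, P₂, hpeq, hP₁len, hw'eq, hv'eq⟩ := walk_decomp_two p i₀ hi₀pos hi₀le
  have hw : vj = w' := (hw'eq.trans hgv').symm
  subst hw
  have hvv : v = v' := (hv'eq.trans hgv).symm
  subst hvv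
  have hppath : p.IsPath := p.isPath_of_length_eq_dist hplen
  have hXP : ((P₁'.concat hadj).append P₂) = p := by
    rw [Walk.concat_append]; exact hpeq.symm
  have hsl := split_lengths hconn (P₁'.concat hadj) P₂ (by rw [hXP]; exact hplen)
  have hXlen : P₁'.length + 1 = G.dist x v := by
    have := hsl.1; rwa [Walk.length_concat] at this
  have hP₂len : P₂.length = G.dist v u := hsl.2
  have hdxu : G.dist x u = G.dist x v + G.dist v u := by
    have h1 := congrArg Walk.length hpeq
    rw [Walk.length_append, Walk.length_cons] at h1
    omega
  -- every shortest approach to `v` from `x` ends in `vs`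
  have entx : ∀ (w : V) (W₀ : G.Walk x w), G.Adj w v → W₀.length + 1 = G.dist x v → w ∈ vs := by
    intro w W₀ hwv hWlen
    have hZlen : (W₀.append (Walk.cons hwv P₂)).length = G.dist x u := by
      rw [Walk.length_append, Walk.length_cons]; omega
    have hZpath := (W₀.append (Walk.cons hwv P₂)).isPath_of_length_eq_dist hZlen
    obtain ⟨i, hipos, hile, hgvv, hgvw⟩ := hxA _ hZlen
    have hmid := getVert_mid W₀ hwv P₂
    have him : i = W₀.length + 1 := by
      refine path_getVert_inj hZpath hile ?_ (hgvv.trans hmid.1.symm)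
      rw [Walk.length_append, Walk.length_cons]; omega
    rw [him] at hgvw
    simpa [hmid.2] using hgvw
  by_cases hyv : y = v
  · subst hyv
    have h1 : G.dist x y = 1 := SimpleGraph.dist_eq_one_iff_adj.mpr hxy
    have h0 : P₁'.length = 0 := by omega
    have hxvj : x = vj := Walk.eq_of_length_eq_zero h0
    exact ⟨by rw [hxvj]; exact hvs hvj, hv⟩
  · by_cases hyA : InAset G u v vs y
    · -- Case B
      obtain ⟨q₀, hq₀len⟩ := hconn.exists_walk_length_eq_dist y u
      obtain ⟨i₁, hi₁pos, hi₁le, hq₀v, hq₀w⟩ := hyA q₀ hq₀len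
      obtain ⟨w₁, v₁, A₁, hadj₁, A₂, hq₀eq, hA₁len, hw₁eq, hv₁eq⟩ :=
        walk_decomp_two q₀ i₁ hi₁pos hi₁le
      have hv₁ : v = v₁ := (hv₁eq.trans hq₀v).symm
      subst hv₁
      have hA : ((A₁.concat hadj₁).append A₂) = q₀ := by
        rw [Walk.concat_append]; exact hq₀eq.symm
      have hsl₂ := split_lengths hconn (A₁.concat hadj₁) A₂ (by rw [hA]; exact hq₀len)
      have hdyu : G.dist y u = G.dist y v + G.dist v u := by
        have h1 := congrArg Walk.length hq₀eq
        rw [Walk.length_append, Walk.length_cons] at h1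
        have h2 := hsl₂.1
        rw [Walk.length_concat] at h2
        have h3 := hsl₂.2
        omega
      obtain ⟨Y, hYlen⟩ := hconn.exists_walk_length_eq_dist y v
      refine master hconn hS hv hvs hxy hyv hvj P₁' hadj hXlen entx Y hYlen (Or.inl ?_)
      intro W₀ hW₀len
      apply hy
      have hmid := getVert_mid W₀ hadj P₂
      refine ⟨hyA, W₀.append (Walk.cons hadj P₂), ?_, W₀.length + 1, by omega, ?_, ?_, ?_⟩
      · rw [Walk.length_append, Walk.length_cons]; omega
      · rw [Walk.length_append, Walk.length_cons]; omega
      · exact hmid.1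
      · simpa using hmid.2
    · -- Case A
      unfold InAset at hyA
      push_neg at hyA
      obtain ⟨q, hqlen, hqprop⟩ := hyA
      have hqpath := q.isPath_of_length_eq_dist hqlen
      by_cases hvq : v ∈ q.support
      · -- Case A2
        obtain ⟨iv, hivv, hivle⟩ := Walk.mem_support_iff_exists_getVert.mp hvq
        have hivpos : 0 < iv := by
          rcases Nat.eq_zero_or_pos iv with h | h
          · exfalso; apply hyv; rw [h, Walk.getVert_zero] at hivv; exact hivv
          · exact h
        have hw₀ : q.getVert (iv - 1) ∉ vs := hqprop iv hivpos hivle hivv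
        obtain ⟨w₀, v₁, Q₁, hadj₀, Q₂, hqeq, hQ₁len, hw₀eq, hv₁eq⟩ :=
          walk_decomp_two q iv hivpos hivle
        have hv₁ : v = v₁ := (hv₁eq.trans hivv).symm
        subst hv₁
        have hQ : ((Q₁.concat hadj₀).append Q₂) = q := by
          rw [Walk.concat_append]; exact hqeq.symm
        have hsl₃ := split_lengths hconn (Q₁.concat hadj₀) Q₂ (by rw [hQ]; exact hqlen)
        refine master hconn hS hv hvs hxy hyv hvj P₁' hadj hXlen entx
          (Q₁.concat hadj₀) hsl₃.1 (Or.inr ⟨w₀, Q₁, hadj₀, rfl, ?_⟩)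
        rw [hw₀eq]; exact hw₀
      · -- Case A1
        have hP₂path : P₂.IsPath := P₂.isPath_of_length_eq_dist hP₂len
        have hP₁'len : P₁'.length = G.dist x vj := by
          have h1 := SimpleGraph.dist_le P₁'
          have h2 := hconn.dist_triangle (u := x) (v := vj) (w := v)
          have h3 : G.dist vj v = 1 := SimpleGraph.dist_eq_one_iff_adj.mpr hadj
          omega
        have hP₁path : P₁'.IsPath := P₁'.isPath_of_length_eq_dist hP₁'len
        have hpsupp : p.support = P₁'.support ++ P₂.support := by
          rw [hpeq, Walk.support_append, Walk.support_cons, List.tail_cons]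
        have hdisjp : ∀ z, z ∈ P₁'.support → z ∈ P₂.support → False := by
          have hnd := hppath.support_nodup
          rw [hpsupp, List.nodup_append] at hnd
          exact fun z h1 h2 => hnd.2.2 _ h1 _ h2 rfl
        have hvP₁ : v ∉ P₁'.support := fun hc => hdisjp v hc P₂.start_mem_support
        have hdisj : ∀ z, z ∈ q.support → z ∈ P₁'.support → False := by
          intro z hzq hzP
          have hx2 : (P₁'.takeUntil z hzP).append
              ((P₁'.dropUntil z hzP).append (Walk.cons hadj P₂)) = p := by
            rw [Walk.append_assoc, Walk.take_spec]; exact hpeq.symm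
          have hslz := split_lengths hconn _ _ (by rw [hx2]; exact hplen)
          have hslq := split_lengths hconn (q.takeUntil z hzq) (q.dropUntil z hzq)
            (by rw [Walk.take_spec]; exact hqlen)
          have hdsum : G.dist x z + G.dist z u = G.dist x u := by
            have h1 := congrArg Walk.length hx2
            rw [Walk.length_append] at h1
            rw [← hslz.1, ← hslz.2, h1, hplen]
          have hZlen : ((P₁'.takeUntil z hzP).append (q.dropUntil z hzq)).length
              = G.dist x u := by
            rw [Walk.length_append, hslz.1, hslq.2, hdsum]
          obtain ⟨i, hipos, hile, hgvv, _⟩ := hxA _ hZlen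
          have hvZ : v ∈ ((P₁'.takeUntil z hzP).append (q.dropUntil z hzq)).support :=
            Walk.mem_support_iff_exists_getVert.mpr ⟨i, hgvv, hile⟩
          rw [Walk.mem_support_append_iff] at hvZ
          rcases hvZ with h | h
          · exact hvP₁ (P₁'.support_takeUntil_subset hzP h)
          · exact hvq (q.support_dropUntil_subset hzq h)
        obtain ⟨z₁, hz₁P₂, W₁, hW₁sub, hW₁first, hW₁path⟩ :=
          first_hit q {t | t ∈ P₂.support} P₂.end_mem_support
        have hW₁path' := hW₁path hqpath
        have hyP₁ : y ∉ P₁'.support := fun hc => hdisj y q.start_mem_support hc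
        have hinner1 : (Walk.cons hxy.symm P₁').IsPath := hP₁path.cons hyP₁
        have hinner2 : (W₁.reverse.append (Walk.cons hxy.symm P₁')).IsPath := by
          refine isPath_append_of hW₁path'.reverse hinner1 ?_
          intro t ht ht'
          rw [Walk.support_reverse, List.mem_reverse] at ht
          rw [Walk.support_cons, List.mem_cons] at ht'
          rcases ht' with rfl | ht'
          · rfl
          · exact (hdisj t (hW₁sub t ht) ht').elim
        have hWfin : ((P₂.takeUntil z₁ hz₁P₂).append
            (W₁.reverse.append (Walk.cons hxy.symm P₁'))).IsPath := by
          refine isPath_append_of (hP₂path.takeUntil _) hinner2 ?_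
          intro t ht ht2
          have htP₂ : t ∈ P₂.support := P₂.support_takeUntil_subset _ ht
          rw [Walk.mem_support_append_iff] at ht2
          rcases ht2 with ht2 | ht2
          · rw [Walk.support_reverse, List.mem_reverse] at ht2
            exact hW₁first t ht2 htP₂
          · rw [Walk.support_cons, List.mem_cons] at ht2
            rcases ht2 with rfl | ht2
            · exact hW₁first t W₁.start_mem_support htP₂
            · exact (hdisjp t ht2 htP₂).elim
        have hall := ear hS (Ne.symm hadj.ne) hv (hvs hvj) _ hWfin
        constructor
        · refine hall x ?_
          rw [Walk.mem_support_append_iff]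
          refine Or.inr ?_
          rw [Walk.mem_support_append_iff]
          refine Or.inr ?_
          rw [Walk.support_cons, List.mem_cons]
          exact Or.inr P₁'.start_mem_support
        · refine hall y ?_
          rw [Walk.mem_support_append_iff]
          refine Or.inr ?_
          rw [Walk.mem_support_append_iff]
          refine Or.inr ?_
          rw [Walk.support_cons, List.mem_cons]
          exact Or.inl rfl


end NCGAux

/-- Let `H` be a non-trivial biconnected component (vertex set
`S`) of a NE graph `G`, `u ∈ V(G)`, `v ∈ S`, and `e_1 = v v₁, …, e_l = v v_l`
links of `H` bought by `v`. If `xy` is an edge of `G` with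
`x ∈ A^{j,u}_{e_1,…,e_l}(v)` and `y ∉ A^{j,u}_{e_1,…,e_l}(v)` then both `x` and
`y` belong to `S`. -/
theorem stmt_4 (n : ℕ) (α : ℝ) (hα : 0 < α)
    (s : Fin n → Finset (Fin n)) (hs : IsNE n α s)
    (S : Set (Fin n)) (hS : IsBiconnectedComponent (commGraph n s) S)
    (hS3 : 3 ≤ S.ncard)
    (u : Fin n) (v : Fin n) (hv : v ∈ S)
    (l : ℕ) (vm : Fin l → Fin n) (hinj : Function.Injective vm)
    (hvm : ∀ i, vm i ∈ s v ∧ vm i ∈ S)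
    (j : Fin l) (x y : Fin n) (hxy : (commGraph n s).Adj x y)
    (hx : InAjset (commGraph n s) u v (vm j) (Set.range vm) x)
    (hy : ¬ InAjset (commGraph n s) u v (vm j) (Set.range vm) y) :
    x ∈ S ∧ y ∈ S := by
  exact NCGAux.core hs.2.1 hS hv (Set.range_subset_iff.mpr fun i => (hvm i).2)
    hxy ⟨j, rfl⟩ hx hy
end

section
/- Let s be a buying Nash equilibrium of the sum classic network creation game with n players and parameter α > 0, with connected graph G = G[s] of diameter d. Then for every node u ∈ V(G) there exists a node v ∈ V(G) such that Σ_{i=1}^{d} |R^i_u(v)| ≥ n·d − 2α. -/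
open SimpleGraph Finset
open scoped Classical

/-! ### Auxiliary lemmas for Statement 13 -/

private lemma stmt13_count (d a b : ℕ) :
    (d : ℝ) - (max 0 ((a : ℝ) - b - 1) + max 0 ((b : ℝ) - a - 1)) ≤
      (((Finset.Icc 1 d).filter (fun i : ℕ => |(a : ℤ) - (b : ℤ)| ≤ (i : ℤ))).card : ℝ) := by
  set k := ((a : ℤ) - (b : ℤ)).natAbs with hk
  have hfil : (Finset.Icc 1 d).filter (fun i : ℕ => |(a : ℤ) - (b : ℤ)| ≤ (i : ℤ))
      = Finset.Icc (max 1 k) d := by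
    ext i
    simp only [Finset.mem_filter, Finset.mem_Icc, Int.abs_eq_natAbs]
    omega
  have hmax : max 0 ((a : ℝ) - b - 1) + max 0 ((b : ℝ) - a - 1) = max 0 ((k : ℝ) - 1) := by
    rcases le_total a b with h | h
    · have ha : (a : ℝ) ≤ b := by exact_mod_cast h
      have hk2 : k = b - a := by omega
      have hk3 : (k : ℝ) = (b : ℝ) - a := by
        rw [hk2, Nat.cast_sub h]
      rw [hk3, max_eq_left (by linarith : (a : ℝ) - b - 1 ≤ 0)]
      ring_nf
    · have ha : (b : ℝ) ≤ a := by exact_mod_cast h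
      have hk2 : k = a - b := by omega
      have hk3 : (k : ℝ) = (a : ℝ) - b := by
        rw [hk2, Nat.cast_sub h]
      rw [hk3, max_eq_left (by linarith : (b : ℝ) - a - 1 ≤ 0)]
      ring_nf
  rw [hfil, hmax, Nat.card_Icc]
  rcases Nat.eq_zero_or_pos k with hk0 | hk1
  · rw [hk0]
    norm_num
  · have h1 : max 0 ((k : ℝ) - 1) = (k : ℝ) - 1 := by
      have : (1 : ℝ) ≤ (k : ℝ) := by exact_mod_cast hk1
      exact max_eq_right (by linarith)
    rw [h1]
    have hnat : d ≤ (d + 1 - max 1 k) + (k - 1) := by omega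
    have hcast : (d : ℝ) ≤ ((d + 1 - max 1 k : ℕ) : ℝ) + ((k - 1 : ℕ) : ℝ) := by
      exact_mod_cast hnat
    have hksub : ((k - 1 : ℕ) : ℝ) = (k : ℝ) - 1 := by
      rw [Nat.cast_sub hk1]; norm_num
    linarith [hcast, hksub.le, hksub.ge]

/-- For any buying NE graph `G` of diameter `d` and any node
`u` there is a node `v` with `Σ_{i=1}^{d} |R^i_u(v)| ≥ n·d − 2α`, where
`R^i_u(v) = {z : |d_G(z,v) − d_G(u,v)| ≤ i}`. -/
theorem stmt_13 (n : ℕ) (α : ℝ) (hα : 0 < α)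
    (s : Fin n → Finset (Fin n)) (hs : IsBuyingNE n α s) (u : Fin n) :
    ∃ v : Fin n,
      (n : ℝ) * (commGraph n s).diam - 2 * α ≤
        ∑ i ∈ Finset.Icc 1 ((commGraph n s).diam),
          ({z : Fin n |
              |((commGraph n s).dist z v : ℤ) - ((commGraph n s).dist u v : ℤ)| ≤
                (i : ℤ)}.ncard : ℝ) := by
  classical
  obtain ⟨hvalid, hconn, hne⟩ := hs
  set G := commGraph n s with hG
  set d := G.diam with hd
  -- Key NE inequality: buying one extra edge x→y cannot save more than α
  have key : ∀ x y : Fin n, ∑ z, max 0 ((G.dist x z : ℝ) - G.dist y z - 1) ≤ α := by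
    intro x y
    by_cases hxy : y = x
    · subst hxy
      have hz : ∀ z : Fin n, max 0 ((G.dist y z : ℝ) - G.dist y z - 1) = 0 := by
        intro z; exact max_eq_left (by linarith)
      rw [Finset.sum_congr rfl (fun z _ => hz z), Finset.sum_const]
      simpa using hα.le
    · set t := insert y (s x) with ht
      have hxt : x ∉ t := by
        rw [ht, Finset.mem_insert]
        push_neg
        exact ⟨fun h => hxy h.symm, hvalid x⟩
      have hsub : s x ⊆ t := Finset.subset_insert _ _
      have hcost := hne x t hxt hsub
      set s' := Function.update s x t with hs'
      set G' := commGraph n s' with hG'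
      have hle : G ≤ G' := by
        intro a b hab
        rw [hG, commGraph, SimpleGraph.fromRel_adj] at hab
        rw [hG', commGraph, SimpleGraph.fromRel_adj]
        refine ⟨hab.1, ?_⟩
        rcases hab.2 with h | h
        · left
          by_cases hax : a = x
          · subst hax; rw [hs', Function.update_self]; exact hsub h
          · rwa [hs', Function.update_of_ne hax]
        · right
          by_cases hbx : b = x
          · subst hbx; rw [hs', Function.update_self]; exact hsub h
          · rwa [hs', Function.update_of_ne hbx]
      have hconn' : G'.Connected := hconn.mono hle
      have hadj : G'.Adj x y := by
        rw [hG', commGraph, SimpleGraph.fromRel_adj]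
        refine ⟨fun h => hxy h.symm, Or.inl ?_⟩
        rw [hs', Function.update_self, ht]
        exact Finset.mem_insert_self y (s x)
      have hdxy : G'.dist x y ≤ 1 := by
        simpa using SimpleGraph.dist_le hadj.toWalk
      have hub : ∀ z, (G'.dist x z : ℝ) ≤ 1 + G.dist y z := by
        intro z
        have h1 : G'.dist x z ≤ G'.dist x y + G'.dist y z := hconn'.dist_triangle
        have h2 : G'.dist y z ≤ G.dist y z := (hconn.preconnected y z).dist_anti hle
        have h3 : G'.dist x z ≤ 1 + G.dist y z := by omega
        exact_mod_cast h3
      have hub2 : ∀ z, (G'.dist x z : ℝ) ≤ G.dist x z := by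
        intro z
        exact_mod_cast (hconn.preconnected x z).dist_anti hle
      have hcard : (t.card : ℝ) ≤ (s x).card + 1 := by
        exact_mod_cast Finset.card_insert_le y (s x)
      rw [gameCost, gameCost, hs', Function.update_self] at hcost
      have hsum : ∑ z, ((G.dist x z : ℝ) - G'.dist x z) ≤ α := by
        rw [Finset.sum_sub_distrib]
        have hmul : α * (t.card : ℝ) ≤ α * ((s x).card + 1) :=
          mul_le_mul_of_nonneg_left hcard hα.le
        have hc2 : α * ((s x).card : ℝ) + ∑ z, (G.dist x z : ℝ)
            ≤ α * (t.card : ℝ) + ∑ z, (G'.dist x z : ℝ) := hcost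
        linarith
      refine le_trans (Finset.sum_le_sum ?_) hsum
      intro z _
      exact max_le (by linarith [hub2 z]) (by linarith [hub z])
  -- Averaging: find a good v
  obtain ⟨v, -, hv⟩ : ∃ v ∈ (Finset.univ : Finset (Fin n)),
      (∑ z, (max 0 ((G.dist z v : ℝ) - G.dist u v - 1)
        + max 0 ((G.dist u v : ℝ) - G.dist z v - 1))) ≤ 2 * α := by
    apply Finset.exists_le_of_sum_le ⟨u, Finset.mem_univ u⟩
    rw [Finset.sum_const, Finset.sum_comm]
    have hzb : ∀ z : Fin n, (∑ w, (max 0 ((G.dist z w : ℝ) - G.dist u w - 1)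
        + max 0 ((G.dist u w : ℝ) - G.dist z w - 1))) ≤ 2 * α := by
      intro z
      rw [Finset.sum_add_distrib]
      have := key z u
      have := key u z
      linarith
    calc ∑ z : Fin n, ∑ w, (max 0 ((G.dist z w : ℝ) - G.dist u w - 1)
          + max 0 ((G.dist u w : ℝ) - G.dist z w - 1))
        ≤ ∑ _z : Fin n, (2 * α) := Finset.sum_le_sum (fun z _ => hzb z)
      _ = Finset.univ.card • (2 * α) := by rw [Finset.sum_const]
  refine ⟨v, ?_⟩
  -- Rewrite each ncard as a sum of indicators and swap sums
  have hrw : ∀ i : ℕ, ({z : Fin n |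
      |((G.dist z v : ℤ)) - ((G.dist u v : ℤ))| ≤ (i : ℤ)}.ncard : ℝ)
      = ∑ z : Fin n, if |((G.dist z v : ℤ)) - ((G.dist u v : ℤ))| ≤ (i : ℤ)
          then (1 : ℝ) else 0 := by
    intro i
    rw [Set.ncard_eq_toFinset_card', Set.toFinset_setOf, Finset.card_filter]
    push_cast
    rfl
  rw [Finset.sum_congr rfl (fun i _ => hrw i), Finset.sum_comm]
  have hper : ∀ z : Fin n, (d : ℝ) - (max 0 ((G.dist z v : ℝ) - G.dist u v - 1)
      + max 0 ((G.dist u v : ℝ) - G.dist z v - 1))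
      ≤ ∑ i ∈ Finset.Icc 1 d, if |((G.dist z v : ℤ)) - ((G.dist u v : ℤ))| ≤ (i : ℤ)
          then (1 : ℝ) else 0 := by
    intro z
    refine le_trans (stmt13_count d (G.dist z v) (G.dist u v)) (le_of_eq ?_)
    rw [← Finset.sum_filter]
    rw [Finset.sum_const]
    simp
  have htot := Finset.sum_le_sum (fun z (_ : z ∈ (Finset.univ : Finset (Fin n))) => hper z)
  rw [Finset.sum_sub_distrib, Finset.sum_const] at htot
  have hcardn : (Finset.univ : Finset (Fin n)).card = n := Finset.card_univ.trans (Fintype.card_fin n)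
  rw [hcardn] at htot
  have : (n : ℝ) * (d : ℝ) - 2 * α ≤ n • (d : ℝ)
      - ∑ z, (max 0 ((G.dist z v : ℝ) - G.dist u v - 1)
        + max 0 ((G.dist u v : ℝ) - G.dist z v - 1)) := by
    rw [nsmul_eq_mul]
    linarith
  exact le_trans this htot
end

section
/- Let s be a buying Nash equilibrium of the sum classic network creation game with n players and parameter α > 0, with connected graph G = G[s] of diameter d. Then for any two nodes v_1, v_2 ∈ V(G): Σ_{i=1}^{d} |M_i(v_1,v_2)| ≥ n·d − 2α. -/
open SimpleGraph Finset
open scoped Classical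

/-- Key consequence of the buying NE property: buying one extra edge from `a` to `b`
costs at most `α` and improves distances accordingly. -/
lemma buy_bound (n : ℕ) (α : ℝ) (hα : 0 < α)
    (s : Fin n → Finset (Fin n)) (hs : IsBuyingNE n α s) (a b : Fin n) (hab : a ≠ b) :
    ∑ z : Fin n, max (((commGraph n s).dist z a : ℝ) - (commGraph n s).dist z b - 1) 0 ≤ α := by
  obtain ⟨hval, hconn, hNE⟩ := hs
  set G := commGraph n s with hG
  set t : Finset (Fin n) := insert b (s a) with ht
  have hat : a ∉ t := by
    simp only [ht, Finset.mem_insert]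
    push_neg
    exact ⟨hab, hval a⟩
  have hsub : s a ⊆ t := Finset.subset_insert _ _
  set s' := Function.update s a t with hs'
  set G' := commGraph n s' with hG'
  have hsw : ∀ w, s w ⊆ s' w := by
    intro w
    by_cases hw : w = a
    · subst hw; simp [hs', Function.update_self]; exact hsub
    · simp [hs', Function.update_of_ne hw]
  have hle : G ≤ G' := by
    intro u v huv
    obtain ⟨hne, h | h⟩ := huv
    · exact ⟨hne, Or.inl (hsw u h)⟩
    · exact ⟨hne, Or.inr (hsw v h)⟩
  have hadj : G'.Adj a b := by
    refine ⟨hab, Or.inl ?_⟩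
    simp [hs', Function.update_self, ht]
  have hconn' : G'.Connected := hconn.mono hle
  have hcost := hNE a t hat hsub
  unfold gameCost at hcost
  rw [Function.update_self] at hcost
  have hcard : (t.card : ℝ) ≤ (s a).card + 1 := by
    have := Finset.card_insert_le b (s a)
    exact_mod_cast this
  have hkey : ∑ z : Fin n, ((G.dist a z : ℝ) - (G'.dist a z : ℝ)) ≤ α := by
    rw [Finset.sum_sub_distrib]
    nlinarith [hcost]
  refine le_trans (Finset.sum_le_sum ?_) hkey
  intro z _
  have h1 : G'.dist a z ≤ G.dist a z :=
    SimpleGraph.Reachable.dist_anti hle (hconn.preconnected a z)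
  have h2 : G'.dist a z ≤ 1 + G.dist b z := by
    have htri : G'.dist a z ≤ G'.dist a b + G'.dist b z := hconn'.dist_triangle
    have hone : G'.dist a b = 1 := SimpleGraph.dist_eq_one_iff_adj.mpr hadj
    have h3 : G'.dist b z ≤ G.dist b z :=
      SimpleGraph.Reachable.dist_anti hle (hconn.preconnected b z)
    omega
  have hca : G.dist z a = G.dist a z := SimpleGraph.dist_comm
  have hcb : G.dist z b = G.dist b z := SimpleGraph.dist_comm
  apply max_le
  · rw [hca, hcb]
    have h2' : (G'.dist a z : ℝ) ≤ 1 + (G.dist b z : ℝ) := by exact_mod_cast h2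
    linarith
  · have h1' : (G'.dist a z : ℝ) ≤ (G.dist a z : ℝ) := by exact_mod_cast h1
    linarith

/-- For any buying NE graph `G` of diameter `d` and any two
nodes `v₁, v₂`, `Σ_{i=1}^{d} |M_i(v₁,v₂)| ≥ n·d − 2α`, where
`M_i(v₁,v₂) = {z : |d_G(z,v₁) − d_G(z,v₂)| ≤ i}`. -/
theorem stmt_14 (n : ℕ) (α : ℝ) (hα : 0 < α)
    (s : Fin n → Finset (Fin n)) (hs : IsBuyingNE n α s) (v₁ v₂ : Fin n) :
    (n : ℝ) * (commGraph n s).diam - 2 * α ≤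
      ∑ i ∈ Finset.Icc 1 ((commGraph n s).diam),
        ({z : Fin n |
            |((commGraph n s).dist z v₁ : ℤ) - ((commGraph n s).dist z v₂ : ℤ)| ≤
              (i : ℤ)}.ncard : ℝ) := by
  classical
  obtain ⟨hval, hconn, hNE⟩ := hs
  set G := commGraph n s with hG
  set d := G.diam with hd
  set Δ : Fin n → ℤ := fun z => ((G.dist z v₁ : ℤ) - (G.dist z v₂ : ℤ)) with hΔ
  by_cases hd0 : d = 0
  · rw [hd0]
    simp only [Nat.cast_zero, mul_zero, zero_sub]
    have : Finset.Icc 1 0 = (∅ : Finset ℕ) := by decide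
    rw [this, Finset.sum_empty]
    linarith
  -- bound |Δ z| ≤ d
  have hne_top : G.ediam ≠ ⊤ := SimpleGraph.ediam_ne_top_of_diam_ne_zero hd0
  have hΔd : ∀ z, |Δ z| ≤ (d : ℤ) := by
    intro z
    have h1 : G.dist z v₁ ≤ G.dist z v₂ + G.dist v₂ v₁ := hconn.dist_triangle
    have h2 : G.dist z v₂ ≤ G.dist z v₁ + G.dist v₁ v₂ := hconn.dist_triangle
    have h3 : G.dist v₁ v₂ ≤ d := SimpleGraph.dist_le_diam hne_top
    have h4 : G.dist v₂ v₁ = G.dist v₁ v₂ := SimpleGraph.dist_comm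
    rw [abs_le]
    simp only [hΔ]
    omega
  -- rewrite ncard as Finset card
  have hset : ∀ i : ℕ, ({z : Fin n | |((G.dist z v₁ : ℤ) - (G.dist z v₂ : ℤ))| ≤ (i : ℤ)}.ncard)
      = (Finset.univ.filter (fun (z : Fin n) => |Δ z| ≤ ((i : ℕ) : ℤ))).card := by
    intro i
    rw [← Set.ncard_coe_finset]
    congr 1
    ext z
    simp [hΔ]
  -- count per z
  have hcount : ∀ z : Fin n,
      (Finset.Icc 1 d |>.filter (fun (i : ℕ) => |Δ z| ≤ (i : ℤ))).card
        = d + 1 - max (|Δ z|).toNat 1 := by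
    intro z
    have hm : (0 : ℤ) ≤ |Δ z| := abs_nonneg _
    have : (Finset.Icc 1 d |>.filter (fun (i : ℕ) => |Δ z| ≤ (i : ℤ)))
        = Finset.Icc (max (|Δ z|).toNat 1) d := by
      ext i
      simp only [Finset.mem_filter, Finset.mem_Icc, max_le_iff]
      constructor
      · rintro ⟨⟨hi1, hi2⟩, hi3⟩
        refine ⟨⟨?_, hi1⟩, hi2⟩
        omega
      · rintro ⟨⟨hi1, hi2⟩, hi3⟩
        refine ⟨⟨hi2, hi3⟩, ?_⟩
        omega
    rw [this, Nat.card_Icc]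
  -- swap sums
  have hswap : ∑ i ∈ Finset.Icc 1 d, (Finset.univ.filter (fun (z : Fin n) => |Δ z| ≤ ((i : ℕ) : ℤ))).card
      = ∑ z : Fin n, (Finset.Icc 1 d |>.filter (fun (i : ℕ) => |Δ z| ≤ (i : ℤ))).card := by
    simp only [Finset.card_filter]
    exact Finset.sum_comm
  -- sum of excesses bounded by 2α
  have hexc : ∑ z : Fin n, ((max (|Δ z| - 1) 0 : ℤ) : ℝ) ≤ 2 * α := by
    by_cases hv : v₁ = v₂
    · have : ∀ z : Fin n, ((max (|Δ z| - 1) 0 : ℤ) : ℝ) = 0 := by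
        intro z
        simp [hΔ, hv]
      rw [Finset.sum_congr rfl (fun z _ => this z), Finset.sum_const, smul_zero]
      linarith
    · have hb1 := buy_bound n α hα s ⟨hval, hconn, hNE⟩ v₁ v₂ hv
      have hb2 := buy_bound n α hα s ⟨hval, hconn, hNE⟩ v₂ v₁ (Ne.symm hv)
      have hpt : ∀ z : Fin n, ((max (|Δ z| - 1) 0 : ℤ) : ℝ) ≤
          max (((G.dist z v₁ : ℝ)) - (G.dist z v₂) - 1) 0
            + max (((G.dist z v₂ : ℝ)) - (G.dist z v₁) - 1) 0 := by
        intro z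
        set x : ℝ := (G.dist z v₁ : ℝ)
        set y : ℝ := (G.dist z v₂ : ℝ)
        have hcast : ((max (|Δ z| - 1) 0 : ℤ) : ℝ) = max (|x - y| - 1) 0 := by
          push_cast [hΔ]
          rfl
        rw [hcast]
        have ha1 : x - y - 1 ≤ max (x - y - 1) 0 := le_max_left _ _
        have ha2 : y - x - 1 ≤ max (y - x - 1) 0 := le_max_left _ _
        have ha3 : (0 : ℝ) ≤ max (x - y - 1) 0 := le_max_right _ _
        have ha4 : (0 : ℝ) ≤ max (y - x - 1) 0 := le_max_right _ _
        apply max_le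
        · rcases abs_cases (x - y) with ⟨h, _⟩ | ⟨h, _⟩ <;> rw [h] <;> linarith
        · linarith
      calc ∑ z : Fin n, ((max (|Δ z| - 1) 0 : ℤ) : ℝ)
          ≤ ∑ z : Fin n, (max (((G.dist z v₁ : ℝ)) - (G.dist z v₂) - 1) 0
            + max (((G.dist z v₂ : ℝ)) - (G.dist z v₁) - 1) 0) :=
            Finset.sum_le_sum (fun z _ => hpt z)
        _ = (∑ z : Fin n, max (((G.dist z v₁ : ℝ)) - (G.dist z v₂) - 1) 0)
            + ∑ z : Fin n, max (((G.dist z v₂ : ℝ)) - (G.dist z v₁) - 1) 0 :=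
            Finset.sum_add_distrib
        _ ≤ α + α := add_le_add hb1 hb2
        _ = 2 * α := by ring
  -- per-z lower bound on the count
  have hper : ∀ z : Fin n, (d : ℝ) - ((max (|Δ z| - 1) 0 : ℤ) : ℝ)
      ≤ ((d + 1 - max (|Δ z|).toNat 1 : ℕ) : ℝ) := by
    intro z
    have hm : (0 : ℤ) ≤ |Δ z| := abs_nonneg _
    have hmd := hΔd z
    have hd1 : 1 ≤ d := Nat.one_le_iff_ne_zero.mpr hd0
    have hz : (d : ℤ) - max (|Δ z| - 1) 0 ≤ ((d + 1 - max (|Δ z|).toNat 1 : ℕ) : ℤ) := by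
      rw [← Int.toNat_eq_max]
      omega
    calc (d : ℝ) - ((max (|Δ z| - 1) 0 : ℤ) : ℝ)
        = (((d : ℤ) - max (|Δ z| - 1) 0 : ℤ) : ℝ) := by push_cast; ring
      _ ≤ ((d + 1 - max (|Δ z|).toNat 1 : ℕ) : ℝ) := by exact_mod_cast hz
  -- put everything together
  have hrhs : ∑ i ∈ Finset.Icc 1 d,
      (({z : Fin n | |((G.dist z v₁ : ℤ) - (G.dist z v₂ : ℤ))| ≤ (i : ℤ)}.ncard : ℝ))
      = ∑ z : Fin n, ((d + 1 - max (|Δ z|).toNat 1 : ℕ) : ℝ) := by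
    have : ∑ i ∈ Finset.Icc 1 d,
        (({z : Fin n | |((G.dist z v₁ : ℤ) - (G.dist z v₂ : ℤ))| ≤ (i : ℤ)}.ncard))
        = ∑ z : Fin n, (d + 1 - max (|Δ z|).toNat 1) := by
      rw [Finset.sum_congr rfl (fun i _ => hset i), hswap]
      exact Finset.sum_congr rfl (fun z _ => hcount z)
    calc ∑ i ∈ Finset.Icc 1 d,
        (({z : Fin n | |((G.dist z v₁ : ℤ) - (G.dist z v₂ : ℤ))| ≤ (i : ℤ)}.ncard : ℝ))
        = ((∑ i ∈ Finset.Icc 1 d,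
          ({z : Fin n | |((G.dist z v₁ : ℤ) - (G.dist z v₂ : ℤ))| ≤ (i : ℤ)}.ncard) : ℕ) : ℝ) := by
          push_cast; rfl
      _ = ((∑ z : Fin n, (d + 1 - max (|Δ z|).toNat 1) : ℕ) : ℝ) := by rw [this]
      _ = ∑ z : Fin n, ((d + 1 - max (|Δ z|).toNat 1 : ℕ) : ℝ) := by push_cast; rfl
  rw [hrhs]
  have hmain : (n : ℝ) * d - ∑ z : Fin n, ((max (|Δ z| - 1) 0 : ℤ) : ℝ)
      ≤ ∑ z : Fin n, ((d + 1 - max (|Δ z|).toNat 1 : ℕ) : ℝ) := by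
    have : (n : ℝ) * d - ∑ z : Fin n, ((max (|Δ z| - 1) 0 : ℤ) : ℝ)
        = ∑ z : Fin n, ((d : ℝ) - ((max (|Δ z| - 1) 0 : ℤ) : ℝ)) := by
      rw [Finset.sum_sub_distrib, Finset.sum_const, Finset.card_univ, Fintype.card_fin,
        nsmul_eq_mul]
    rw [this]
    exact Finset.sum_le_sum (fun z _ => hper z)
  linarith
end

section
/- Let s be a Nash equilibrium of the sum classic network creation game with n players and parameter α > 0, with graph G = G[s], and let H be a non-trivial biconnected component of G with diameter at most 2. Then for every node v ∈ V(H): deg_H^+(v) ≤ 3n/α. -/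
open SimpleGraph Finset
open scoped Classical

/-! ### Auxiliary lemmas for the proof of Statement 15 -/

namespace Stmt15Aux

open SimpleGraph Walk

variable {V : Type*} {G : SimpleGraph V}

/-- A prefix walk to the `i`-th vertex of a walk, of length at most `i`. -/
lemma exists_prefix_walk {a b : V} (p : G.Walk a b) (i : ℕ) :
    ∃ q : G.Walk a (p.getVert i), q.length ≤ i := by
  induction p generalizing i with
  | nil =>
    exact ⟨Walk.nil.copy rfl (Walk.getVert_of_length_le _ (by simp)).symm, by simp⟩
  | cons hadj q ih =>
    cases i with
    | zero => exact ⟨Walk.nil.copy rfl (Walk.getVert_zero _).symm, by simp⟩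
    | succ i =>
      obtain ⟨r, hr⟩ := ih i
      refine ⟨(Walk.cons hadj r).copy rfl (Walk.getVert_cons_succ _ _).symm, ?_⟩
      simp only [Walk.length_copy, Walk.length_cons]
      omega

/-- A suffix walk from the `i`-th vertex of a walk, of length at most `p.length - i`. -/
lemma exists_suffix_walk {a b : V} (p : G.Walk a b) (i : ℕ) :
    ∃ q : G.Walk (p.getVert i) b, q.length ≤ p.length - i := by
  induction p generalizing i with
  | nil =>
    exact ⟨Walk.nil.copy (Walk.getVert_of_length_le _ (by simp)).symm rfl, by simp⟩
  | cons hadj q ih =>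
    cases i with
    | zero => exact ⟨(Walk.cons hadj q).copy (Walk.getVert_zero _).symm rfl, by simp⟩
    | succ i =>
      obtain ⟨r, hr⟩ := ih i
      refine ⟨r.copy (Walk.getVert_cons_succ _ _).symm rfl, ?_⟩
      simp only [Walk.length_copy, Walk.length_cons]
      omega

/-- If a path starting at `v` contains the edge `s(v,u)`, then this edge is its
first edge. -/
lemma first_edge_decomp {v u z : V} (p : G.Walk v z) (hp : p.IsPath)
    (he : s(v, u) ∈ p.edges) :
    ∃ (h : G.Adj v u) (q : G.Walk u z), p = Walk.cons h q ∧ v ∉ q.support := by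
  cases p with
  | nil => simp at he
  | cons hadj q =>
    have hq : v ∉ q.support := ((Walk.cons_isPath_iff _ _).mp hp).2
    rw [Walk.edges_cons, List.mem_cons] at he
    rcases he with he | he
    · rw [Sym2.eq_iff] at he
      rcases he with ⟨-, hbu⟩ | ⟨hvb, -⟩
      · subst hbu; exact ⟨hadj, q, rfl, hq⟩
      · exact absurd hvb hadj.ne
    · exact absurd (q.fst_mem_support_of_mem_edges he) hq

/-- If a walk of length at most 2 from `y` to `u` contains the edge `s(v,u)`,
with `y ∉ {v, u}` and `v ≠ u`, then `y` is adjacent to `v`. -/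
lemma adj_of_short_walk {y u v : V} (Q : G.Walk y u) (h2 : Q.length ≤ 2)
    (he : s(v, u) ∈ Q.edges) (hyv : y ≠ v) (hyu : y ≠ u) (hvu : v ≠ u) :
    G.Adj y v := by
  cases Q with
  | nil => simp at he
  | cons h1 Q1 =>
    rw [Walk.edges_cons, List.mem_cons] at he
    rcases he with he | he
    · rw [Sym2.eq_iff] at he
      rcases he with ⟨hvy, -⟩ | ⟨-, huy⟩
      · exact absurd hvy.symm hyv
      · exact absurd huy.symm hyu
    · cases Q1 with
      | nil => simp at he
      | cons h2' Q2 =>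
        have hQ2 : Q2.length = 0 := by
          simp only [Walk.length_cons] at h2; omega
        have hdu := Walk.eq_of_length_eq_zero hQ2
        subst hdu
        rw [Walk.edges_cons, List.mem_cons] at he
        rcases he with he | he
        · rw [Sym2.eq_iff] at he
          rcases he with ⟨hvc, -⟩ | ⟨hvu', -⟩
          · subst hvc; exact h1
          · exact absurd hvu' hvu
        · have : Q2.edges = [] :=
            List.eq_nil_of_length_eq_zero (by rw [Walk.length_edges]; exact hQ2)
          simp [this] at he

/-- Any vertex reachable from (but distinct from) another vertex has a neighbor. -/
lemma exists_adj_of_ne {a b : V} (h : G.Reachable a b) (hab : a ≠ b) : ∃ c, G.Adj a c := by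
  obtain ⟨p⟩ := h
  cases p with
  | nil => exact absurd rfl hab
  | cons hadj q => exact ⟨_, hadj⟩

/-- In a biconnected graph of diameter at most 2 on at least 3 vertices, after
deleting one edge its endpoints are still joined by a walk of length at most 4. -/
lemma detour_le_four {V : Type*} [Finite V] {H : SimpleGraph V} {v u : V}
    (hdiam : ∀ a b : V, H.dist a b ≤ 2)
    (hconn : H.Connected)
    (hcut : ∀ x : V, (H.induce {w | w ≠ x}).Connected)
    (hcard : 3 ≤ Nat.card V)
    (hadj : H.Adj v u) :
    ∃ W : (H.deleteEdges {s(v, u)}).Walk v u, W.length ≤ 4 := by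
  have hvu : v ≠ u := hadj.ne
  -- a third vertex
  have hthird : ∃ x : V, x ≠ v ∧ x ≠ u := by
    by_contra hc
    push_neg at hc
    have hsub : (Set.univ : Set V) ⊆ {v, u} := by
      intro x _
      by_cases hxv : x = v
      · exact Or.inl hxv
      · exact Or.inr (hc x hxv)
    have h1 := Set.ncard_le_ncard hsub (Set.toFinite _)
    rw [Set.ncard_univ] at h1
    have h2 : ({v, u} : Set V).ncard ≤ 2 :=
      (Set.ncard_insert_le _ _).trans (by simp [Set.ncard_singleton])
    omega
  obtain ⟨x, hxv, hxu⟩ := hthird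
  -- a neighbor w of u with w ≠ v
  have hrx : (H.induce {w | w ≠ v}).Reachable ⟨u, hadj.ne'⟩ ⟨x, hxv⟩ :=
    (hcut v).preconnected _ _
  obtain ⟨c, hc⟩ := exists_adj_of_ne hrx
    (by intro h; exact hxu (congrArg Subtype.val h).symm)
  have huw : H.Adj u ↑c := by simpa using hc
  have hwv : (c : V) ≠ v := c.2
  have hwu : (c : V) ≠ u := huw.ne'
  set w : V := ↑c with hwdef
  -- reach v → w in the edge-deleted graph, through H - u
  have fmap : ∀ {a b : ↥({t | t ≠ u} : Set V)}, (H.induce {t | t ≠ u}).Adj a b →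
      (H.deleteEdges {s(v, u)}).Adj ↑a ↑b := by
    intro a b hab
    rw [SimpleGraph.deleteEdges_adj]
    refine ⟨by simpa using hab, ?_⟩
    simp only [Set.mem_singleton_iff, Sym2.eq_iff]
    rintro (⟨-, h⟩ | ⟨h, -⟩)
    · exact b.2 h
    · exact a.2 h
  have hrvw : (H.deleteEdges {s(v, u)}).Reachable v w := by
    have := ((hcut u).preconnected ⟨v, hvu⟩ ⟨w, hwu⟩).map
      (⟨Subtype.val, fmap⟩ : (H.induce {t | t ≠ u}) →g (H.deleteEdges {s(v, u)}))
    exact this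
  have hadjwu : (H.deleteEdges {s(v, u)}).Adj w u := by
    rw [SimpleGraph.deleteEdges_adj]
    refine ⟨huw.symm, ?_⟩
    simp only [Set.mem_singleton_iff, Sym2.eq_iff]
    rintro (⟨h, -⟩ | ⟨h, -⟩)
    · exact hwv h
    · exact hwu h
  have hreach : (H.deleteEdges {s(v, u)}).Reachable v u := hrvw.trans hadjwu.reachable
  obtain ⟨P, hP⟩ := hreach.exists_walk_length_eq_dist
  by_cases hm4 : (H.deleteEdges {s(v, u)}).dist v u ≤ 4
  · exact ⟨P, by rw [hP]; exact hm4⟩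
  push_neg at hm4
  exfalso
  obtain ⟨W1, hW1⟩ := exists_prefix_walk P 2
  obtain ⟨W2, hW2⟩ := exists_suffix_walk P 2
  have hyu : P.getVert 2 ≠ u := by
    intro h
    have := SimpleGraph.dist_le (W1.copy rfl h)
    rw [SimpleGraph.Walk.length_copy] at this
    omega
  have hyv : P.getVert 2 ≠ v := by
    intro h
    have := SimpleGraph.dist_le (W2.copy h rfl)
    rw [SimpleGraph.Walk.length_copy] at this
    rw [hP] at hW2
    omega
  obtain ⟨Q, hQ⟩ := (hconn.preconnected (P.getVert 2) u).exists_walk_length_eq_dist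
  have hQ2 : Q.length ≤ 2 := by rw [hQ]; exact hdiam _ u
  by_cases heQ : s(v, u) ∈ Q.edges
  · have hyvadj : H.Adj (P.getVert 2) v := adj_of_short_walk Q hQ2 heQ hyv hyu hvu
    have hyvadj' : (H.deleteEdges {s(v, u)}).Adj v (P.getVert 2) := by
      rw [SimpleGraph.deleteEdges_adj]
      refine ⟨hyvadj.symm, ?_⟩
      simp only [Set.mem_singleton_iff, Sym2.eq_iff]
      rintro (⟨-, h⟩ | ⟨h, -⟩)
      · exact hyu h
      · exact hvu h
    have := SimpleGraph.dist_le (Walk.cons hyvadj' W2)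
    rw [Walk.length_cons] at this
    rw [hP] at hW2
    omega
  · have hQE : ∀ e ∈ Q.edges, e ∈ (H.deleteEdges {s(v, u)}).edgeSet := by
      intro e he'
      rw [SimpleGraph.edgeSet_deleteEdges]
      refine ⟨Q.edges_subset_edgeSet he', ?_⟩
      simp only [Set.mem_singleton_iff]
      rintro rfl
      exact heQ he'
    have := SimpleGraph.dist_le (W1.append (Q.transfer _ hQE))
    rw [Walk.length_append, Walk.length_transfer] at this
    omega

/-- Deleting a single edge whose endpoints remain reachable preserves connectivity. -/
lemma connected_delete_edge {v u : V}
    (hconn : G.Connected) (hr : (G.deleteEdges {s(v, u)}).Reachable v u) :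
    (G.deleteEdges {s(v, u)}).Connected := by
  have hne : Nonempty V := hconn.nonempty
  rw [SimpleGraph.connected_iff]
  refine ⟨fun a b => ?_, hne⟩
  obtain ⟨p⟩ := hconn.preconnected a b
  induction p with
  | nil => exact Reachable.refl _
  | @cons a c b hadj q ih =>
    refine Reachable.trans ?_ ih
    by_cases he : s(a, c) = s(v, u)
    · rw [Sym2.eq_iff] at he
      rcases he with ⟨rfl, rfl⟩ | ⟨rfl, rfl⟩
      · exact hr
      · exact hr.symm
    · exact (SimpleGraph.deleteEdges_adj.mpr ⟨hadj, by simpa using he⟩).reachable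

end Stmt15Aux

section CommGraphAux

open SimpleGraph

lemma commGraph_adj {n : ℕ} {s : Fin n → Finset (Fin n)} {a b : Fin n} :
    (commGraph n s).Adj a b ↔ a ≠ b ∧ (b ∈ s a ∨ a ∈ s b) := by
  simp [commGraph, SimpleGraph.fromRel_adj]

/-- In a Nash equilibrium no link is bought by both of its endpoints. -/
lemma no_double_buy {n : ℕ} {α : ℝ} (hα : 0 < α) {s : Fin n → Finset (Fin n)}
    (hs : IsNE n α s) {v u : Fin n} (hu : u ∈ s v) : v ∉ s u := by
  intro hvu
  obtain ⟨hval, hconn, hne⟩ := hs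
  have hvv : v ∉ s v := hval v
  have huv_ne : u ≠ v := fun h => hvv (h ▸ hu)
  have hgeq : commGraph n (Function.update s v (s v \ {u})) = commGraph n s := by
    ext a b
    simp only [commGraph_adj, Function.update_apply]
    by_cases hav : a = v <;> by_cases hbv : b = v <;>
      by_cases hau : a = u <;> by_cases hbu : b = u <;>
      simp only [hav, hbv, hau, hbu, if_pos rfl, if_neg, if_true, if_false,
        Finset.mem_sdiff, Finset.mem_singleton, eq_self_iff_true, not_true, not_false_iff] <;>
      simp_all [Finset.mem_sdiff] <;> tauto
  have hconn' : (commGraph n (Function.update s v (s v \ {u}))).Connected := by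
    rw [hgeq]; exact hconn
  have hineq := hne v (s v \ {u}) (by simp [hvv]) hconn'
  unfold gameCost at hineq
  rw [Function.update_self, hgeq] at hineq
  have hcard : (s v \ {u}).card = (s v).card - 1 := by
    rw [Finset.card_sdiff_of_subset (by simpa using hu)]
    simp
  have hpos : 1 ≤ (s v).card := Finset.card_pos.mpr ⟨u, hu⟩
  rw [hcard] at hineq
  have hcast : (((s v).card - 1 : ℕ) : ℝ) = ((s v).card : ℝ) - 1 := by
    push_cast [hpos]
    ring
  rw [hcast] at hineq
  nlinarith

/-- Deleting one bought, non-doubly-bought link from the strategy deletes exactly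
that edge from the communication network. -/
lemma commGraph_update_delete {n : ℕ} {s : Fin n → Finset (Fin n)} (hval : ValidProfile n s)
    {v u : Fin n} (hu : u ∈ s v) (hnd : v ∉ s u) :
    commGraph n (Function.update s v (s v \ {u})) = (commGraph n s).deleteEdges {s(v, u)} := by
  have hvu : u ≠ v := fun h => hval v (h ▸ hu)
  ext a b
  simp only [commGraph_adj, SimpleGraph.deleteEdges_adj, Set.mem_singleton_iff, Sym2.eq_iff,
    Function.update_apply, Finset.mem_sdiff, Finset.mem_singleton]
  by_cases hav : a = v <;> by_cases hbv : b = v <;>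
    by_cases hau : a = u <;> by_cases hbu : b = u <;>
    simp_all <;> tauto

end CommGraphAux

/-- If `H` (vertex set `S`) is a non-trivial biconnected
component of a NE graph with diameter at most `2`, then `deg_H^+(v) ≤ 3n/α`
for every `v ∈ S`. -/
theorem stmt_15 (n : ℕ) (α : ℝ) (hα : 0 < α)
    (s : Fin n → Finset (Fin n)) (hs : IsNE n α s)
    (S : Set (Fin n)) (hS : IsBiconnectedComponent (commGraph n s) S)
    (hS3 : 3 ≤ S.ncard)
    (hdH : ((commGraph n s).induce S).diam ≤ 2)
    (v : Fin n) (hv : v ∈ S) :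
    (degHplus n s S v : ℝ) ≤ 3 * n / α := by
  classical
  obtain ⟨hval, hconn, hne⟩ := hs
  obtain ⟨⟨hHconn, hHcut⟩, -⟩ := hS
  haveI : Nonempty ↥S := ⟨⟨v, hv⟩⟩
  -- diameter bound on distances in H
  have hediam : ((commGraph n s).induce S).ediam ≠ ⊤ := by
    obtain ⟨a, b, hab⟩ :=
      SimpleGraph.exists_edist_eq_ediam_of_finite (G := (commGraph n s).induce S)
    rw [← hab, SimpleGraph.edist_ne_top_iff_reachable]
    exact hHconn.preconnected a b
  have hdiam : ∀ a b : ↥S, ((commGraph n s).induce S).dist a b ≤ 2 :=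
    fun a b => (SimpleGraph.dist_le_diam hediam).trans hdH
  -- the set of links bought by v inside S
  set K : Finset (Fin n) := (s v).filter (fun z => z ∈ S) with hK
  have hdeg : degHplus n s S v = K.card := by
    have hset : (↑(s v) : Set (Fin n)) ∩ S = ↑K := by
      ext z
      simp [hK, Set.mem_inter_iff]
    rw [degHplus, hset, Set.ncard_coe_finset]
  -- the sets of vertices whose distance from v strictly increases when the
  -- edge s(v,u) is deleted
  set A : Fin n → Finset (Fin n) := fun u =>
    Finset.univ.filter (fun z =>
      (commGraph n s).dist v z < ((commGraph n s).deleteEdges {s(v, u)}).dist v z) with hA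
  -- Main per-edge bound: dropping the bought link v→u would save α and cost at
  -- most 3 per vertex in A u, so α ≤ 3|A u|.
  have main : ∀ u ∈ K, α ≤ 3 * ((A u).card : ℝ) := by
    intro u huK
    rw [hK, Finset.mem_filter] at huK
    obtain ⟨hu, huS⟩ := huK
    have hvu_ne : u ≠ v := fun h => hval v (h ▸ hu)
    have hnd : v ∉ s u := no_double_buy hα ⟨hval, hconn, hne⟩ hu
    have hGadj : (commGraph n s).Adj v u := commGraph_adj.mpr ⟨hvu_ne.symm, Or.inl hu⟩
    -- the detour of length ≤ 4 inside H
    have hadjH : ((commGraph n s).induce S).Adj ⟨v, hv⟩ ⟨u, huS⟩ := by simpa using hGadj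
    have hcard3 : 3 ≤ Nat.card ↥S := by rwa [Nat.card_coe_set_eq]
    obtain ⟨W, hW⟩ := Stmt15Aux.detour_le_four hdiam hHconn hHcut hcard3 hadjH
    -- push the detour down to the full edge-deleted graph
    have fmap : ∀ {a b : ↥S},
        (((commGraph n s).induce S).deleteEdges
          {s((⟨v, hv⟩ : ↥S), (⟨u, huS⟩ : ↥S))}).Adj a b →
        ((commGraph n s).deleteEdges {s(v, u)}).Adj ↑a ↑b := by
      intro a b hab
      rw [SimpleGraph.deleteEdges_adj] at hab ⊢
      refine ⟨by simpa using hab.1, ?_⟩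
      intro hmem
      apply hab.2
      simp only [Set.mem_singleton_iff, Sym2.eq_iff] at hmem ⊢
      rcases hmem with ⟨h1, h2⟩ | ⟨h1, h2⟩
      · exact Or.inl ⟨Subtype.ext h1, Subtype.ext h2⟩
      · exact Or.inr ⟨Subtype.ext h1, Subtype.ext h2⟩
    let F : (((commGraph n s).induce S).deleteEdges
          {s((⟨v, hv⟩ : ↥S), (⟨u, huS⟩ : ↥S))}) →g
        ((commGraph n s).deleteEdges {s(v, u)}) :=
      ⟨fun a => (a : Fin n), fun {a b} hab => fmap hab⟩
    have hd4 : ((commGraph n s).deleteEdges {s(v, u)}).dist v u ≤ 4 := by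
      refine le_trans (SimpleGraph.dist_le (W.map F)) ?_
      rw [SimpleGraph.Walk.length_map]
      exact hW
    have hreach_vu : ((commGraph n s).deleteEdges {s(v, u)}).Reachable v u :=
      ⟨W.map F⟩
    have hDconn : ((commGraph n s).deleteEdges {s(v, u)}).Connected :=
      Stmt15Aux.connected_delete_edge hconn hreach_vu
    -- the Nash equilibrium deviation
    have hgeq := commGraph_update_delete hval hu hnd
    have hconn' : (commGraph n (Function.update s v (s v \ {u}))).Connected := by
      rw [hgeq]; exact hDconn
    have hineq := hne v (s v \ {u}) (by simp [hval v]) hconn'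
    unfold gameCost at hineq
    rw [Function.update_self, hgeq] at hineq
    -- distance bounds
    have hlow : ∀ z, (commGraph n s).dist v z ≤
        ((commGraph n s).deleteEdges {s(v, u)}).dist v z := by
      intro z
      exact SimpleGraph.Reachable.dist_anti (SimpleGraph.deleteEdges_le _)
        (hDconn.preconnected v z)
    have hup : ∀ z, ((commGraph n s).deleteEdges {s(v, u)}).dist v z ≤
        (commGraph n s).dist v z + 3 := by
      intro z
      obtain ⟨p₀, hp₀⟩ := (hconn.preconnected v z).exists_walk_length_eq_dist
      have hplen : p₀.bypass.length = (commGraph n s).dist v z :=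
        le_antisymm (hp₀ ▸ SimpleGraph.Walk.length_bypass_le p₀) (SimpleGraph.dist_le _)
      have hppath : p₀.bypass.IsPath := SimpleGraph.Walk.bypass_isPath p₀
      by_cases he : s(v, u) ∈ p₀.bypass.edges
      · obtain ⟨hadj', q, hpq, hvq⟩ := Stmt15Aux.first_edge_decomp p₀.bypass hppath he
        have hqe : ∀ e ∈ q.edges, e ∈ ((commGraph n s).deleteEdges {s(v, u)}).edgeSet := by
          intro e he'
          rw [SimpleGraph.edgeSet_deleteEdges]
          refine ⟨q.edges_subset_edgeSet he', ?_⟩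
          simp only [Set.mem_singleton_iff]
          rintro rfl
          exact hvq (q.fst_mem_support_of_mem_edges he')
        obtain ⟨R, hR⟩ := hreach_vu.exists_walk_length_eq_dist
        have hDz := SimpleGraph.dist_le (R.append (q.transfer _ hqe))
        rw [SimpleGraph.Walk.length_append, SimpleGraph.Walk.length_transfer, hR] at hDz
        have hq_len : q.length + 1 = (commGraph n s).dist v z := by
          rw [← hplen, hpq, SimpleGraph.Walk.length_cons]
        omega
      · have hqe : ∀ e ∈ p₀.bypass.edges,
            e ∈ ((commGraph n s).deleteEdges {s(v, u)}).edgeSet := by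
          intro e he'
          rw [SimpleGraph.edgeSet_deleteEdges]
          refine ⟨p₀.bypass.edges_subset_edgeSet he', ?_⟩
          simp only [Set.mem_singleton_iff]
          rintro rfl
          exact he he'
        have hDz := SimpleGraph.dist_le (p₀.bypass.transfer _ hqe)
        rw [SimpleGraph.Walk.length_transfer, hplen] at hDz
        omega
    -- sum the per-vertex increases
    have hsum : (∑ z, (((commGraph n s).deleteEdges {s(v, u)}).dist v z : ℝ)) -
        (∑ z, ((commGraph n s).dist v z : ℝ)) ≤ 3 * ((A u).card : ℝ) := by
      rw [← Finset.sum_sub_distrib]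
      have hle : ∀ z ∈ (Finset.univ : Finset (Fin n)),
          (((commGraph n s).deleteEdges {s(v, u)}).dist v z : ℝ) -
            ((commGraph n s).dist v z : ℝ) ≤ if z ∈ A u then (3 : ℝ) else 0 := by
        intro z _
        by_cases hz : z ∈ A u
        · rw [if_pos hz]
          have h1 := hup z
          have h2 : (((commGraph n s).deleteEdges {s(v, u)}).dist v z : ℝ) ≤
              ((commGraph n s).dist v z : ℝ) + 3 := by exact_mod_cast h1
          linarith
        · rw [if_neg hz]
          have h3 : ¬ ((commGraph n s).dist v z <
              ((commGraph n s).deleteEdges {s(v, u)}).dist v z) := by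
            simpa [hA] using hz
          have h4 := hlow z
          have h5 : ((commGraph n s).deleteEdges {s(v, u)}).dist v z =
              (commGraph n s).dist v z := le_antisymm (not_lt.mp h3) h4
          rw [h5]
          simp
      refine le_trans (Finset.sum_le_sum hle) ?_
      rw [Finset.sum_ite_mem, Finset.univ_inter, Finset.sum_const, nsmul_eq_mul]
      ring_nf
      exact le_refl _
    -- extract α ≤ 3 |A u| from the NE inequality
    have hcard1 : 1 ≤ (s v).card := Finset.card_pos.mpr ⟨u, hu⟩
    have hcards : ((s v \ {u}).card : ℝ) = ((s v).card : ℝ) - 1 := by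
      rw [Finset.card_sdiff_of_subset (by simpa using hu)]
      simp only [Finset.card_singleton]
      rw [Nat.cast_sub hcard1, Nat.cast_one]
    rw [hcards] at hineq
    linarith
  -- the sets A u are pairwise disjoint
  have hdisj : ∀ u₁ ∈ K, ∀ u₂ ∈ K, u₁ ≠ u₂ → Disjoint (A u₁) (A u₂) := by
    intro u₁ _ u₂ _ hne12
    rw [Finset.disjoint_left]
    intro z hz1 hz2
    simp only [hA, Finset.mem_filter, Finset.mem_univ, true_and] at hz1 hz2
    obtain ⟨p₀, hp₀⟩ := (hconn.preconnected v z).exists_walk_length_eq_dist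
    have hplen : p₀.bypass.length = (commGraph n s).dist v z :=
      le_antisymm (hp₀ ▸ SimpleGraph.Walk.length_bypass_le p₀) (SimpleGraph.dist_le _)
    have hppath : p₀.bypass.IsPath := SimpleGraph.Walk.bypass_isPath p₀
    have hmem : ∀ u' : Fin n, (commGraph n s).dist v z <
        ((commGraph n s).deleteEdges {s(v, u')}).dist v z → s(v, u') ∈ p₀.bypass.edges := by
      intro u' hlt
      by_contra hne'
      have hqe : ∀ e ∈ p₀.bypass.edges,
          e ∈ ((commGraph n s).deleteEdges {s(v, u')}).edgeSet := by
        intro e he'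
        rw [SimpleGraph.edgeSet_deleteEdges]
        refine ⟨p₀.bypass.edges_subset_edgeSet he', ?_⟩
        simp only [Set.mem_singleton_iff]
        rintro rfl
        exact hne' he'
      have hDz := SimpleGraph.dist_le (p₀.bypass.transfer _ hqe)
      rw [SimpleGraph.Walk.length_transfer, hplen] at hDz
      omega
    obtain ⟨ha1, q1, hpq1, -⟩ := Stmt15Aux.first_edge_decomp p₀.bypass hppath (hmem u₁ hz1)
    obtain ⟨ha2, q2, hpq2, -⟩ := Stmt15Aux.first_edge_decomp p₀.bypass hppath (hmem u₂ hz2)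
    apply hne12
    have e1 : p₀.bypass.getVert 1 = u₁ := by
      rw [hpq1]; exact (SimpleGraph.Walk.getVert_cons_succ q1 ha1 (n := 0)).trans q1.getVert_zero
    have e2 : p₀.bypass.getVert 1 = u₂ := by
      rw [hpq2]; exact (SimpleGraph.Walk.getVert_cons_succ q2 ha2 (n := 0)).trans q2.getVert_zero
    rw [← e1, e2]
  -- combine everything
  have hKsum : (∑ u ∈ K, ((A u).card : ℝ)) ≤ (n : ℝ) := by
    have hbi : ∑ u ∈ K, (A u).card = (K.biUnion A).card := (Finset.card_biUnion hdisj).symm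
    have hle : (K.biUnion A).card ≤ n := by
      refine le_trans (Finset.card_le_univ _) ?_
      simp
    have : (∑ u ∈ K, ((A u).card : ℝ)) = ((∑ u ∈ K, (A u).card : ℕ) : ℝ) := by push_cast; ring
    rw [this, hbi]
    exact_mod_cast hle
  have hαK : α * (K.card : ℝ) ≤ 3 * n := by
    have h1 : ∑ _u ∈ K, α ≤ ∑ u ∈ K, 3 * ((A u).card : ℝ) := Finset.sum_le_sum main
    rw [Finset.sum_const, nsmul_eq_mul, ← Finset.mul_sum] at h1
    nlinarith
  rw [hdeg, le_div_iff₀ hα]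
  nlinarith
end

section
/- Let s be a Nash equilibrium of the sum classic network creation game with n players and parameter α > 0, with graph G = G[s] of diameter d ≥ 8. Then for every node v ∈ V(G), the number of nodes z with d_G(v,z) ≤ ⌊d/8⌋ − 1 is at most 4α/d. -/
open SimpleGraph Finset
open scoped Classical

/-- For any NE graph `G` of diameter `d ≥ 8` and any node
`v`, the number of nodes at distance at most `⌊d/8⌋ − 1` from `v` is at most
`4α/d`. -/
theorem stmt_17 (n : ℕ) (α : ℝ) (hα : 0 < α)
    (s : Fin n → Finset (Fin n)) (hs : IsNE n α s)
    (hd : 8 ≤ (commGraph n s).diam) (v : Fin n) :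
    ({z : Fin n | (commGraph n s).dist v z ≤ (commGraph n s).diam / 8 - 1}.ncard : ℝ) ≤
      4 * α / (commGraph n s).diam := by
  classical
  obtain ⟨hvalid, hconn, hNE⟩ := hs
  set G := commGraph n s with hG
  set d := G.diam with hdd
  have hne : Nonempty (Fin n) := hconn.nonempty
  -- pick a vertex `u` with `d ≤ 2 * dist v u`
  obtain ⟨x, y, hxy⟩ := G.exists_dist_eq_diam
  have htri : G.dist x y ≤ G.dist x v + G.dist v y := hconn.dist_triangle
  have hxv : G.dist x v = G.dist v x := SimpleGraph.dist_comm
  obtain ⟨u, hu⟩ : ∃ u, d ≤ 2 * G.dist v u := by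
    by_cases h : d ≤ 2 * G.dist v x
    · exact ⟨x, h⟩
    · exact ⟨y, by omega⟩
  have huv : u ≠ v := by
    intro h; subst h
    simp [SimpleGraph.dist_self] at hu
    omega
  have hvsu : v ∉ s u := by
    intro hmem
    have hadj : G.Adj u v := by
      rw [hG, commGraph, SimpleGraph.fromRel_adj]
      exact ⟨huv, Or.inl hmem⟩
    have h1 : G.dist v u ≤ 1 := by
      have := G.dist_le hadj.symm.toWalk
      simpa using this
    omega
  set t : Finset (Fin n) := insert v (s u) with ht
  have hut : u ∉ t := by
    simp only [ht, Finset.mem_insert]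
    push_neg
    exact ⟨huv, hvalid u⟩
  set s' := Function.update s u t with hs'
  set G' := commGraph n s' with hG'
  have hsub : ∀ w, s w ⊆ s' w := by
    intro w
    by_cases hw : w = u
    · subst hw; simp only [hs', Function.update_self, ht]
      exact Finset.subset_insert _ _
    · simp [hs', Function.update_of_ne hw]
  have hle : G ≤ G' := by
    intro a b hab
    rw [hG, commGraph, SimpleGraph.fromRel_adj] at hab
    rw [hG', commGraph, SimpleGraph.fromRel_adj]
    exact ⟨hab.1, hab.2.imp (fun h => hsub a h) (fun h => hsub b h)⟩
  have hconn' : G'.Connected := hconn.mono hle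
  have hdist_le : ∀ a b : Fin n, G'.dist a b ≤ G.dist a b := by
    intro a b
    obtain ⟨p, hp⟩ := hconn.exists_walk_length_eq_dist a b
    calc G'.dist a b ≤ (p.mapLe hle).length := G'.dist_le _
    _ = G.dist a b := by rw [SimpleGraph.Walk.length_map]; exact hp
  have hadj' : G'.Adj u v := by
    rw [hG', commGraph, SimpleGraph.fromRel_adj]
    refine ⟨huv, Or.inl ?_⟩
    simp [hs', ht]
  -- distance bounds for nodes in the ball
  have hball : ∀ z : Fin n, G.dist v z ≤ d / 8 - 1 →
      (d : ℝ) / 4 ≤ (G.dist u z : ℝ) - (G'.dist u z : ℝ) := by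
    intro z hz
    have h1 : G'.dist u z ≤ G.dist v z + 1 := by
      obtain ⟨p, hp⟩ := hconn.exists_walk_length_eq_dist v z
      have := G'.dist_le (hadj'.toWalk.append (p.mapLe hle))
      simpa [SimpleGraph.Walk.length_append, hp] using this
    have h2 : G.dist v u ≤ G.dist v z + G.dist u z := by
      have := hconn.dist_triangle (u := v) (v := z) (w := u)
      rwa [show G.dist z u = G.dist u z from SimpleGraph.dist_comm] at this
    have key : d + 4 * G'.dist u z ≤ 4 * G.dist u z := by omega
    have keyR : (d : ℝ) + 4 * (G'.dist u z : ℝ) ≤ 4 * (G.dist u z : ℝ) := by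
      exact_mod_cast key
    linarith
  have hnonneg : ∀ z : Fin n, (0 : ℝ) ≤ (G.dist u z : ℝ) - (G'.dist u z : ℝ) := by
    intro z
    have := hdist_le u z
    have : (G'.dist u z : ℝ) ≤ (G.dist u z : ℝ) := by exact_mod_cast this
    linarith
  -- Nash equilibrium inequality
  have hcost := hNE u t hut hconn'
  have hcard : (t.card : ℝ) = (s u).card + 1 := by
    rw [ht, Finset.card_insert_of_notMem hvsu]; push_cast; ring
  have hsum : ∑ z, ((G.dist u z : ℝ) - (G'.dist u z : ℝ)) ≤ α := by
    have h1 : gameCost n α s u = α * (s u).card + ∑ z, ((G.dist u z : ℝ)) := rfl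
    have h2 : gameCost n α (Function.update s u t) u
        = α * (t.card : ℝ) + ∑ z, ((G'.dist u z : ℝ)) := by
      rw [gameCost, Function.update_self]
    rw [h1, h2, hcard] at hcost
    rw [Finset.sum_sub_distrib]
    linarith
  -- sum over the ball
  set B := {z : Fin n | G.dist v z ≤ d / 8 - 1} with hB
  have hBfin : B.ncard = B.toFinset.card := Set.ncard_eq_toFinset_card' B
  have hsumB : (B.toFinset.card : ℝ) * ((d : ℝ) / 4) ≤
      ∑ z ∈ B.toFinset, ((G.dist u z : ℝ) - (G'.dist u z : ℝ)) := by
    calc (B.toFinset.card : ℝ) * ((d : ℝ) / 4)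
        = ∑ _z ∈ B.toFinset, (d : ℝ) / 4 := by
          rw [Finset.sum_const, nsmul_eq_mul]
      _ ≤ _ := by
          apply Finset.sum_le_sum
          intro z hz
          exact hball z (by simpa [hB] using hz)
  have hsub' : ∑ z ∈ B.toFinset, ((G.dist u z : ℝ) - (G'.dist u z : ℝ)) ≤
      ∑ z, ((G.dist u z : ℝ) - (G'.dist u z : ℝ)) :=
    Finset.sum_le_sum_of_subset_of_nonneg (Finset.subset_univ _)
      (fun z _ _ => hnonneg z)
  have hdpos : (0 : ℝ) < d := by
    have : (8 : ℝ) ≤ d := by exact_mod_cast hd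
    linarith
  rw [hBfin, div_eq_mul_inv, ← div_eq_mul_inv, le_div_iff₀ hdpos]
  have := le_trans hsumB (le_trans hsub' hsum)
  nlinarith [this]
end

section
/- Let s be a Nash equilibrium of the sum classic network creation game with n players and parameter α > 0, with graph G = G[s], and let u, v ∈ V(G) with d_G(u,v) ≥ 2. Then the number of nodes z such that every shortest path in G from z to u passes through v is at most α/(d_G(u,v) − 1). -/
open SimpleGraph Finset
open scoped Classical

section Stmt19Aux

lemma commGraph_mono {n : ℕ} {s s' : Fin n → Finset (Fin n)} (h : ∀ w, s w ⊆ s' w) :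
    commGraph n s ≤ commGraph n s' := by
  intro a b hab
  rw [commGraph, SimpleGraph.fromRel_adj] at hab ⊢
  exact ⟨hab.1, hab.2.imp (fun h' => h _ h') (fun h' => h _ h')⟩

end Stmt19Aux

/-- For any NE graph `G` and nodes `u`, `v` with
`d_G(u,v) ≥ 2`, the number of nodes `z` such that every shortest path from `z`
to `u` passes through `v` is at most `α/(d_G(u,v) − 1)`. -/
theorem stmt_19 (n : ℕ) (α : ℝ) (hα : 0 < α)
    (s : Fin n → Finset (Fin n)) (hs : IsNE n α s)
    (u v : Fin n) (hd : 2 ≤ (commGraph n s).dist u v) :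
    ({z : Fin n | ∀ p : (commGraph n s).Walk z u,
        p.length = (commGraph n s).dist z u → v ∈ p.support}.ncard : ℝ) ≤
      α / (((commGraph n s).dist u v : ℝ) - 1) := by
  classical
  obtain ⟨hval, hconn, hNE⟩ := hs
  set G := commGraph n s with hGdef
  have huv : u ≠ v := by
    intro h; subst h; simp [SimpleGraph.dist_self] at hd
  have hvns : v ∉ s u := by
    intro hv
    have hadj : G.Adj u v := by
      rw [hGdef, commGraph, SimpleGraph.fromRel_adj]; exact ⟨huv, Or.inl hv⟩
    have h1 : G.dist u v ≤ 1 := by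
      have := G.dist_le hadj.toWalk
      simpa using this
    omega
  set t : Finset (Fin n) := insert v (s u) with htdef
  set s' : Fin n → Finset (Fin n) := Function.update s u t with hs'def
  set G' := commGraph n s' with hG'def
  have hsub : ∀ w, s w ⊆ s' w := by
    intro w
    by_cases hw : w = u
    · subst hw; simp [hs'def, htdef, Finset.subset_insert]
    · simp [hs'def, Function.update_of_ne hw]
  have hle : G ≤ G' := commGraph_mono hsub
  have hconn' : G'.Connected := hconn.mono hle
  have hut : u ∉ t := by
    simp only [htdef, Finset.mem_insert]
    push_neg
    exact ⟨huv, hval u⟩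
  have hcost := hNE u t hut hconn'
  have hcard : (s' u).card = (s u).card + 1 := by
    simp [hs'def, htdef, Finset.card_insert_of_notMem hvns]
  -- the deviated graph has edge u v
  have hadj' : G'.Adj u v := by
    rw [hG'def, commGraph, SimpleGraph.fromRel_adj]
    refine ⟨huv, Or.inl ?_⟩
    simp [hs'def, htdef]
  set B : Set (Fin n) := {z : Fin n | ∀ p : G.Walk z u,
      p.length = G.dist z u → v ∈ p.support} with hBdef
  have hBfin : B.ncard = B.toFinset.card := Set.ncard_eq_toFinset_card' B
  -- key distance inequality for members of B
  have hkey : ∀ z ∈ B.toFinset, G'.dist u z + G.dist u v ≤ G.dist u z + 1 := by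
    intro z hz
    rw [Set.mem_toFinset] at hz
    have hr : G.Reachable z u := hconn.preconnected z u
    obtain ⟨p, hp⟩ := hr.exists_walk_length_eq_dist
    have hvp : v ∈ p.support := hz p hp
    set q := p.takeUntil v hvp with hq
    set r := p.dropUntil v hvp with hr'
    have hlen := congrArg SimpleGraph.Walk.length (p.take_spec hvp)
    rw [SimpleGraph.Walk.length_append] at hlen
    rw [← hq, ← hr'] at hlen
    have hdvu : G.dist u v ≤ r.length := by
      rw [G.dist_comm]
      exact G.dist_le r
    have hwalk : G'.dist u z ≤ q.length + 1 := by
      have h := G'.dist_le (SimpleGraph.Walk.cons hadj'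
          ((q.reverse).map (SimpleGraph.Hom.ofLE hle)))
      simpa [SimpleGraph.Walk.length_map] using h
    have hdzu : G.dist u z = p.length := by rw [G.dist_comm]; exact hp.symm
    omega
  have hmono : ∀ z : Fin n, G'.dist u z ≤ G.dist u z :=
    fun z => (hconn.preconnected u z).dist_anti hle
  -- summed inequality over all vertices, in ℕ
  have hsumN : B.toFinset.card * (G.dist u v - 1) + ∑ z, G'.dist u z ≤ ∑ z, G.dist u z := by
    have h1 : ∀ z : Fin n,
        G'.dist u z + (if z ∈ B.toFinset then G.dist u v - 1 else 0) ≤ G.dist u z := by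
      intro z
      by_cases hz : z ∈ B.toFinset
      · have := hkey z hz
        simp only [hz, if_true]
        omega
      · simpa [hz] using hmono z
    calc B.toFinset.card * (G.dist u v - 1) + ∑ z, G'.dist u z
        = ∑ z, (G'.dist u z + (if z ∈ B.toFinset then G.dist u v - 1 else 0)) := by
          rw [Finset.sum_add_distrib, Finset.sum_ite_mem, Finset.univ_inter,
            Finset.sum_const, smul_eq_mul, add_comm]
      _ ≤ ∑ z, G.dist u z := Finset.sum_le_sum (fun z _ => h1 z)
  -- cost inequality in ℝ
  have hcostR : (∑ z, (G.dist u z : ℝ)) ≤ α + ∑ z, (G'.dist u z : ℝ) := by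
    have h2 : gameCost n α s u ≤ gameCost n α s' u := hcost
    rw [gameCost, gameCost] at h2
    rw [show commGraph n s' = G' from rfl] at h2
    rw [hcard] at h2
    have : α * ((s u).card : ℝ) + ∑ z, (G.dist u z : ℝ)
        ≤ α * (((s u).card : ℝ) + 1) + ∑ z, (G'.dist u z : ℝ) := by
      convert h2 using 3 <;> push_cast <;> ring
    nlinarith [this]
  -- combine
  have hd1 : (0:ℝ) < (G.dist u v : ℝ) - 1 := by
    have : (2:ℝ) ≤ (G.dist u v : ℝ) := by exact_mod_cast hd
    linarith
  rw [hBfin, le_div_iff₀ hd1]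
  have hcast : (B.toFinset.card : ℝ) * ((G.dist u v : ℝ) - 1)
      = ((B.toFinset.card * (G.dist u v - 1) : ℕ) : ℝ) := by
    have : ((G.dist u v - 1 : ℕ) : ℝ) = (G.dist u v : ℝ) - 1 := by
      have : 1 ≤ G.dist u v := by omega
      push_cast [this]; ring
    push_cast [Nat.cast_sub (by omega : 1 ≤ G.dist u v)]
    ring
  rw [hcast]
  have hS : ((∑ z, G.dist u z : ℕ) : ℝ) - ((∑ z, G'.dist u z : ℕ) : ℝ) ≤ α := by
    have := hcostR
    push_cast at this ⊢
    linarith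
  have := hsumN
  have h3 : ((B.toFinset.card * (G.dist u v - 1) : ℕ) : ℝ)
      ≤ ((∑ z, G.dist u z : ℕ) : ℝ) - ((∑ z, G'.dist u z : ℕ) : ℝ) := by
    have h4 : (((B.toFinset.card * (G.dist u v - 1) + ∑ z, G'.dist u z : ℕ)) : ℝ)
        ≤ ((∑ z, G.dist u z : ℕ) : ℝ) := by exact_mod_cast hsumN
    push_cast at h4 ⊢
    linarith
  linarith
end
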